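/- arXiv:1612.01700 — 5 statements merged into one kernel-verified Lean document; each statement's English description precedes it below -/
import Mathlib

section
/- Let N ≥ 2, 1 ≤ k < N, R > 0 and b ≥ 0 with bR ≤ k. Let Ω ⊆ B_R(0) be a bounded open subset of ℝ^N and let H : Ω × ℝ^N → ℝ be continuous and satisfy (SC1) with constant b. If u : Ω → ℝ is a lower semicontinuous viscosity supersolution of 𝒫⁻ₖ(D²u) + H(x,∇u) = 0 in Ω (that is, 𝒫⁻ₖ(D²u) + H(x,∇u) ≤ 0 in the viscosity sense) and liminf_{x→∂Ω} u(x) ≥ 0, then u ≥ 0 in Ω. -/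
open Metric Filter Topology Set

/-- `𝒫⁻ₖ(D²φ(x))`: the sum of the `k` smallest eigenvalues of the Hessian of `φ` at `x`,
expressed through the min-max representation over orthonormal `k`-frames. -/
noncomputable def Pminus {N : ℕ} (k : ℕ) (φ : EuclideanSpace ℝ (Fin N) → ℝ)
    (x : EuclideanSpace ℝ (Fin N)) : ℝ :=
  sInf {s : ℝ | ∃ ξ : Fin k → EuclideanSpace ℝ (Fin N), Orthonormal ℝ ξ ∧
    s = ∑ i, iteratedFDeriv ℝ 2 φ x ![ξ i, ξ i]}

/-- `𝒫⁺ₖ(D²φ(x))`: the sum of the `k` largest eigenvalues of the Hessian of `φ` at `x`. -/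
noncomputable def Pplus {N : ℕ} (k : ℕ) (φ : EuclideanSpace ℝ (Fin N) → ℝ)
    (x : EuclideanSpace ℝ (Fin N)) : ℝ :=
  sSup {s : ℝ | ∃ ξ : Fin k → EuclideanSpace ℝ (Fin N), Orthonormal ℝ ξ ∧
    s = ∑ i, iteratedFDeriv ℝ 2 φ x ![ξ i, ξ i]}

/-- Viscosity subsolution of `P(D²u) + H(x,∇u) + μ u = f(x)` in `Ω`:
for every `x₀ ∈ Ω` and every `C²` test function `φ` such that `u - φ` has a local
maximum (relative to `Ω`) at `x₀`, one has `P(D²φ(x₀)) + H(x₀,∇φ(x₀)) + μ u(x₀) ≥ f(x₀)`. -/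
def IsViscSubsol {N : ℕ}
    (P : (EuclideanSpace ℝ (Fin N) → ℝ) → EuclideanSpace ℝ (Fin N) → ℝ)
    (Ω : Set (EuclideanSpace ℝ (Fin N)))
    (H : EuclideanSpace ℝ (Fin N) → EuclideanSpace ℝ (Fin N) → ℝ)
    (μ : ℝ) (f : EuclideanSpace ℝ (Fin N) → ℝ)
    (u : EuclideanSpace ℝ (Fin N) → ℝ) : Prop :=
  ∀ x₀ ∈ Ω, ∀ φ : EuclideanSpace ℝ (Fin N) → ℝ, ContDiffAt ℝ 2 φ x₀ →
    IsLocalMaxOn (fun x => u x - φ x) Ω x₀ →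
    f x₀ ≤ P φ x₀ + H x₀ (gradient φ x₀) + μ * u x₀

/-- Viscosity supersolution of `P(D²u) + H(x,∇u) + μ u = f(x)` in `Ω`. -/
def IsViscSupersol {N : ℕ}
    (P : (EuclideanSpace ℝ (Fin N) → ℝ) → EuclideanSpace ℝ (Fin N) → ℝ)
    (Ω : Set (EuclideanSpace ℝ (Fin N)))
    (H : EuclideanSpace ℝ (Fin N) → EuclideanSpace ℝ (Fin N) → ℝ)
    (μ : ℝ) (f : EuclideanSpace ℝ (Fin N) → ℝ)
    (u : EuclideanSpace ℝ (Fin N) → ℝ) : Prop :=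
  ∀ x₀ ∈ Ω, ∀ φ : EuclideanSpace ℝ (Fin N) → ℝ, ContDiffAt ℝ 2 φ x₀ →
    IsLocalMinOn (fun x => u x - φ x) Ω x₀ →
    P φ x₀ + H x₀ (gradient φ x₀) + μ * u x₀ ≤ f x₀

/-- Structure condition (SC1): `|H(x,ξ)| ≤ b‖ξ‖`. -/
def SC1 {N : ℕ} (Ω : Set (EuclideanSpace ℝ (Fin N)))
    (H : EuclideanSpace ℝ (Fin N) → EuclideanSpace ℝ (Fin N) → ℝ) (b : ℝ) : Prop :=
  ∀ x ∈ Ω, ∀ ξ : EuclideanSpace ℝ (Fin N), |H x ξ| ≤ b * ‖ξ‖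

/-- Structure condition (SC2): positive 1-homogeneity in the gradient variable. -/
def SC2 {N : ℕ} (Ω : Set (EuclideanSpace ℝ (Fin N)))
    (H : EuclideanSpace ℝ (Fin N) → EuclideanSpace ℝ (Fin N) → ℝ) : Prop :=
  ∀ x ∈ Ω, ∀ t : ℝ, 0 ≤ t → ∀ ξ : EuclideanSpace ℝ (Fin N), H x (t • ξ) = t * H x ξ

/-- Structure condition (SC3): uniform continuity in `x` through a modulus of continuity. -/
def SC3 {N : ℕ} (Ω : Set (EuclideanSpace ℝ (Fin N)))
    (H : EuclideanSpace ℝ (Fin N) → EuclideanSpace ℝ (Fin N) → ℝ) : Prop :=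
  ∃ ω : ℝ → ℝ, Monotone ω ∧ Filter.Tendsto ω (𝓝[>] (0 : ℝ)) (𝓝 (0 : ℝ)) ∧
    ∀ x ∈ Ω, ∀ y ∈ Ω, ∀ ξ : EuclideanSpace ℝ (Fin N),
      |H x ξ - H y ξ| ≤ ω (‖x - y‖ * (1 + ‖ξ‖))

/-- `Ω ∈ 𝒞_R`: a "hula hoop" domain, i.e. an intersection of a nonempty family of
open balls of the common radius `R`. -/
def HulaHoop {N : ℕ} (R : ℝ) (Ω : Set (EuclideanSpace ℝ (Fin N))) : Prop :=
  ∃ Y : Set (EuclideanSpace ℝ (Fin N)), Y.Nonempty ∧ Ω = ⋂ y ∈ Y, ball y R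

/-- `μ̄ₖ⁻(Ω)`: the supremum (in `EReal`) of those `μ` for which there is an upper
semicontinuous `w < 0` on `cl(Ω)` which is a viscosity subsolution of
`𝒫⁻ₖ(D²w) + H(x,∇w) + μ w = 0` in `Ω`. -/
noncomputable def muBarMinus {N : ℕ} (k : ℕ) (Ω : Set (EuclideanSpace ℝ (Fin N)))
    (H : EuclideanSpace ℝ (Fin N) → EuclideanSpace ℝ (Fin N) → ℝ) : EReal :=
  sSup {m : EReal | ∃ μ : ℝ, m = (μ : EReal) ∧ ∃ w : EuclideanSpace ℝ (Fin N) → ℝ,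
    UpperSemicontinuousOn w (closure Ω) ∧ (∀ x ∈ closure Ω, w x < 0) ∧
    IsViscSubsol (Pminus k) Ω H μ (fun _ => 0) w}

/-- `μₖ⁻(Ω)`: as `μ̄ₖ⁻(Ω)`, but only requiring `w < 0` (and upper semicontinuous) in `Ω`. -/
noncomputable def muMinus {N : ℕ} (k : ℕ) (Ω : Set (EuclideanSpace ℝ (Fin N)))
    (H : EuclideanSpace ℝ (Fin N) → EuclideanSpace ℝ (Fin N) → ℝ) : EReal :=
  sSup {m : EReal | ∃ μ : ℝ, m = (μ : EReal) ∧ ∃ w : EuclideanSpace ℝ (Fin N) → ℝ,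
    UpperSemicontinuousOn w Ω ∧ (∀ x ∈ Ω, w x < 0) ∧
    IsViscSubsol (Pminus k) Ω H μ (fun _ => 0) w}

/-- `μ̄ₖ⁺(Ω)`: the supremum (in `EReal`) of those `μ` for which there is a lower
semicontinuous `w > 0` on `cl(Ω)` which is a viscosity supersolution of
`𝒫⁻ₖ(D²w) + H(x,∇w) + μ w = 0` in `Ω`. -/
noncomputable def muBarPlus {N : ℕ} (k : ℕ) (Ω : Set (EuclideanSpace ℝ (Fin N)))
    (H : EuclideanSpace ℝ (Fin N) → EuclideanSpace ℝ (Fin N) → ℝ) : EReal :=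
  sSup {m : EReal | ∃ μ : ℝ, m = (μ : EReal) ∧ ∃ w : EuclideanSpace ℝ (Fin N) → ℝ,
    LowerSemicontinuousOn w (closure Ω) ∧ (∀ x ∈ closure Ω, 0 < w x) ∧
    IsViscSupersol (Pminus k) Ω H μ (fun _ => 0) w}

/-- `μₖ⁺(Ω)`: as `μ̄ₖ⁺(Ω)`, but only requiring `w > 0` (and lower semicontinuous) in `Ω`. -/
noncomputable def muPlus {N : ℕ} (k : ℕ) (Ω : Set (EuclideanSpace ℝ (Fin N)))
    (H : EuclideanSpace ℝ (Fin N) → EuclideanSpace ℝ (Fin N) → ℝ) : EReal :=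
  sSup {m : EReal | ∃ μ : ℝ, m = (μ : EReal) ∧ ∃ w : EuclideanSpace ℝ (Fin N) → ℝ,
    LowerSemicontinuousOn w Ω ∧ (∀ x ∈ Ω, 0 < w x) ∧
    IsViscSupersol (Pminus k) Ω H μ (fun _ => 0) w}

open scoped RealInnerProductSpace

lemma lsc_exists_min {E : Type*} [TopologicalSpace E] [T2Space E] {S : Set E}
    (hS : IsCompact S) (hne : S.Nonempty) {f : E → ℝ}
    (hf : LowerSemicontinuousOn f S) : ∃ x₀ ∈ S, ∀ y ∈ S, f x₀ ≤ f y := by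
  haveI : Nonempty S := hne.to_subtype
  have hScl : IsClosed S := hS.isClosed
  set t : S → Set E := fun x => {y ∈ S | f y ≤ f x.1} with ht
  have htsub : ∀ x, t x ⊆ S := fun x y hy => hy.1
  have htcl : ∀ x : S, IsClosed (t x) := by
    intro x
    apply isClosed_of_closure_subset
    intro z hz
    have hzS : z ∈ S := hScl.closure_subset (closure_mono (htsub x) hz)
    refine ⟨hzS, ?_⟩
    by_contra hlt
    push_neg at hlt
    have hev : ∀ᶠ y in 𝓝[S] z, f x.1 < f y := hf z hzS _ hlt
    have hne' : (𝓝[t x] z).NeBot := mem_closure_iff_nhdsWithin_neBot.1 hz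
    have hev' : ∀ᶠ y in 𝓝[t x] z, f x.1 < f y :=
      hev.filter_mono (nhdsWithin_mono z (htsub x))
    have hev'' : ∀ᶠ y in 𝓝[t x] z, y ∈ t x := eventually_mem_nhdsWithin
    obtain ⟨y, hy1, hy2⟩ := (hev'.and hev'').exists
    exact absurd hy2.2 (not_le.2 hy1)
  have htcomp : ∀ x : S, IsCompact (t x) := fun x => hS.of_isClosed_subset (htcl x) (htsub x)
  have htne : ∀ x : S, (t x).Nonempty := fun x => ⟨x.1, x.2, le_rfl⟩
  have hdir : Directed (· ⊇ ·) t := by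
    intro x y
    rcases le_total (f x.1) (f y.1) with h | h
    · exact ⟨x, fun z hz => hz, fun z hz => ⟨hz.1, hz.2.trans h⟩⟩
    · exact ⟨y, fun z hz => ⟨hz.1, hz.2.trans h⟩, fun z hz => hz⟩
  obtain ⟨z, hz⟩ :=
    IsCompact.nonempty_iInter_of_directed_nonempty_isCompact_isClosed t hdir htne htcomp htcl
  simp only [mem_iInter] at hz
  rcases hne with ⟨w, hw⟩
  exact ⟨z, (hz ⟨w, hw⟩).1, fun y hy => (hz ⟨y, hy⟩).2⟩

lemma quad_hasFDerivAt {N : ℕ} (c R : ℝ) (x : EuclideanSpace ℝ (Fin N)) :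
    HasFDerivAt (fun y : EuclideanSpace ℝ (Fin N) => c * ⟪y, y⟫ - c * R^2)
      ((2*c) • innerSL ℝ x) x := by
  have h1 := ((hasFDerivAt_id x).inner ℝ (hasFDerivAt_id x)).const_mul c
  have h2 := h1.sub_const (c * R^2)
  have heq : (2*c) • innerSL ℝ x
      = c • ((fderivInnerCLM ℝ (x, x)).comp
          ((ContinuousLinearMap.id ℝ _).prod (ContinuousLinearMap.id ℝ _))) := by
    ext y
    simp [fderivInnerCLM_apply, real_inner_comm x y]
    ring
  rw [heq]
  exact h2


lemma quad_iteratedFDeriv {N : ℕ} (c R : ℝ) (x ξ : EuclideanSpace ℝ (Fin N)) :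
    iteratedFDeriv ℝ 2 (fun y : EuclideanSpace ℝ (Fin N) => c * ⟪y, y⟫ - c * R^2) x ![ξ, ξ]
      = 2 * c * ‖ξ‖^2 := by
  set L : EuclideanSpace ℝ (Fin N) →L[ℝ] EuclideanSpace ℝ (Fin N) →L[ℝ] ℝ :=
    (2*c) • innerSL ℝ with hL
  have hre : fderiv ℝ (fun y : EuclideanSpace ℝ (Fin N) => c * ⟪y, y⟫ - c * R^2) = ⇑L := by
    funext z
    have := (quad_hasFDerivAt c R z).fderiv
    rw [this, hL]
    rfl
  rw [iteratedFDeriv_two_apply, hre, L.fderiv]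
  show L ξ ξ = 2 * c * ‖ξ‖^2
  rw [hL]
  simp only [ContinuousLinearMap.smul_apply, innerSL_apply_apply, smul_eq_mul,
    real_inner_self_eq_norm_sq]
  exact congrArg (fun t => 2 * c * t) (real_inner_self_eq_norm_sq ξ)

lemma quad_gradient {N : ℕ} (c R : ℝ) (x : EuclideanSpace ℝ (Fin N)) :
    gradient (fun y : EuclideanSpace ℝ (Fin N) => c * ⟪y, y⟫ - c * R^2) x = (2*c) • x := by
  apply HasGradientAt.gradient
  rw [hasGradientAt_iff_hasFDerivAt]
  have heq : (InnerProductSpace.toDual ℝ (EuclideanSpace ℝ (Fin N)) ((2*c) • x)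
      : EuclideanSpace ℝ (Fin N) →L[ℝ] ℝ) = (2*c) • innerSL ℝ x := by
    ext y
    simp [InnerProductSpace.toDual_apply_apply, real_inner_smul_left]
  rw [heq]
  exact quad_hasFDerivAt c R x

lemma quad_contDiff {N : ℕ} (c R : ℝ) :
    ContDiff ℝ 2 (fun y : EuclideanSpace ℝ (Fin N) => c * ⟪y, y⟫ - c * R^2) :=
  (contDiff_const.mul (contDiff_id.inner ℝ contDiff_id)).sub contDiff_const

lemma pminus_quad {N : ℕ} (k : ℕ) (hkN : k ≤ N) (c R : ℝ) (x : EuclideanSpace ℝ (Fin N)) :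
    sInf {s : ℝ | ∃ ξ : Fin k → EuclideanSpace ℝ (Fin N), Orthonormal ℝ ξ ∧
      s = ∑ i, iteratedFDeriv ℝ 2
        (fun y : EuclideanSpace ℝ (Fin N) => c * ⟪y, y⟫ - c * R^2) x ![ξ i, ξ i]}
      = 2 * c * k := by
  have hset : {s : ℝ | ∃ ξ : Fin k → EuclideanSpace ℝ (Fin N), Orthonormal ℝ ξ ∧
      s = ∑ i, iteratedFDeriv ℝ 2
        (fun y : EuclideanSpace ℝ (Fin N) => c * ⟪y, y⟫ - c * R^2) x ![ξ i, ξ i]}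
      = {2 * c * (k : ℝ)} := by
    ext s
    simp only [mem_setOf_eq, mem_singleton_iff]
    constructor
    · rintro ⟨ξ, hξ, rfl⟩
      have h : ∀ i, iteratedFDeriv ℝ 2
          (fun y : EuclideanSpace ℝ (Fin N) => c * ⟪y, y⟫ - c * R^2) x ![ξ i, ξ i] = 2 * c := by
        intro i
        rw [quad_iteratedFDeriv, hξ.1 i]
        ring
      simp only [h, Finset.sum_const, Finset.card_univ, Fintype.card_fin, nsmul_eq_mul]
      ring
    · rintro rfl
      refine ⟨⇑(EuclideanSpace.basisFun (Fin N) ℝ) ∘ Fin.castLE hkN,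
        (EuclideanSpace.basisFun (Fin N) ℝ).orthonormal.comp (Fin.castLE hkN)
        (Fin.castLE_injective hkN), ?_⟩
      have h : ∀ i : Fin k, iteratedFDeriv ℝ 2
          (fun y : EuclideanSpace ℝ (Fin N) => c * ⟪y, y⟫ - c * R^2) x
          ![(⇑(EuclideanSpace.basisFun (Fin N) ℝ) ∘ Fin.castLE hkN) i,
            (⇑(EuclideanSpace.basisFun (Fin N) ℝ) ∘ Fin.castLE hkN) i] = 2 * c := by
        intro i
        rw [quad_iteratedFDeriv]
        have : ‖((EuclideanSpace.basisFun (Fin N) ℝ) : Fin N → EuclideanSpace ℝ (Fin N))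
            (Fin.castLE hkN i)‖ = 1 :=
          (EuclideanSpace.basisFun (Fin N) ℝ).orthonormal.1 _
        simp only [Function.comp_apply]
        rw [this]
        ring
      simp only [h, Finset.sum_const, Finset.card_univ, Fintype.card_fin, nsmul_eq_mul]
      ring
  rw [hset, csInf_singleton]

/-- weak minimum principle for `𝒫⁻ₖ(D²u) + H(x,∇u)` in `Ω ⊆ B_R(0)`
when `bR ≤ k`. -/
theorem statement0 {N : ℕ} (hN : 2 ≤ N) (k : ℕ) (hk1 : 1 ≤ k) (hkN : k < N)
    (R b : ℝ) (hR : 0 < R) (hb : 0 ≤ b) (hbR : b * R ≤ (k : ℝ))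
    (Ω : Set (EuclideanSpace ℝ (Fin N))) (hΩopen : IsOpen Ω)
    (hΩsub : Ω ⊆ ball (0 : EuclideanSpace ℝ (Fin N)) R)
    (H : EuclideanSpace ℝ (Fin N) → EuclideanSpace ℝ (Fin N) → ℝ)
    (hHcont : ContinuousOn (Function.uncurry H)
      (Ω ×ˢ (univ : Set (EuclideanSpace ℝ (Fin N)))))
    (hSC1 : SC1 Ω H b)
    (u : EuclideanSpace ℝ (Fin N) → ℝ)
    (hu : LowerSemicontinuousOn u Ω)
    (hsuper : IsViscSupersol (Pminus k) Ω H 0 (fun _ => 0) u)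
    (hbdry : ∀ z ∈ frontier Ω, ∀ ε > 0, ∀ᶠ x in 𝓝[Ω] z, -ε < u x) :
    ∀ x ∈ Ω, 0 ≤ u x := by
  by_contra hcon
  push_neg at hcon
  obtain ⟨x₀, hx₀, hux₀⟩ := hcon
  have hR2 : (0:ℝ) < 2 * R^2 := by positivity
  set c : ℝ := -u x₀ / (2 * R^2) with hc
  have hc0 : 0 < c := by
    rw [hc]; apply div_pos <;> linarith
  set φ : EuclideanSpace ℝ (Fin N) → ℝ := fun y => c * ⟪y, y⟫ - c * R^2 with hφ
  have hφneg : ∀ y ∈ Ω, φ y < 0 := by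
    intro y hy
    have h1 : ‖y‖ < R := by simpa [mem_ball_zero_iff] using hΩsub hy
    have h2 : (⟪y, y⟫:ℝ) = ‖y‖^2 := real_inner_self_eq_norm_sq y
    have h3 : 0 ≤ ‖y‖ := norm_nonneg y
    have h4 : ‖y‖^2 < R^2 := by nlinarith
    rw [hφ]; dsimp only; rw [h2]
    nlinarith [mul_pos hc0 (sub_pos.2 h4)]
  set v : EuclideanSpace ℝ (Fin N) → ℝ := fun y => u y - φ y with hv
  have hcR : c * R^2 = -u x₀ / 2 := by
    rw [hc]; field_simp
  have hv₀ : v x₀ < 0 := by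
    have h2 : (0:ℝ) ≤ ⟪x₀, x₀⟫ := real_inner_self_nonneg
    rw [hv]; dsimp only; rw [hφ]; dsimp only; nlinarith
  set m : ℝ := v x₀ with hm
  set S : Set (EuclideanSpace ℝ (Fin N)) := {y ∈ Ω | v y ≤ m} with hS
  have hSsub : S ⊆ Ω := fun y hy => hy.1
  have hvlsc : LowerSemicontinuousOn v Ω := by
    have hφc : Continuous φ := by
      rw [hφ]
      exact (continuous_const.mul (continuous_id.inner continuous_id)).sub continuous_const
    have h := hu.add ((hφc.neg).lowerSemicontinuous.lowerSemicontinuousOn (s := Ω))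
    rw [hv]
    simpa [sub_eq_add_neg] using h
  have hScl : IsClosed S := by
    apply isClosed_of_closure_subset
    intro z hz
    have hzΩcl : z ∈ closure Ω := closure_mono hSsub hz
    have hneb : (𝓝[S] z).NeBot := mem_closure_iff_nhdsWithin_neBot.1 hz
    have hmemS : ∀ᶠ y in 𝓝[S] z, y ∈ S := eventually_mem_nhdsWithin
    by_cases hzΩ : z ∈ Ω
    · refine ⟨hzΩ, ?_⟩
      by_contra hlt
      push_neg at hlt
      have hev : ∀ᶠ y in 𝓝[Ω] z, m < v y := hvlsc z hzΩ m hlt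
      have hev' : ∀ᶠ y in 𝓝[S] z, m < v y := hev.filter_mono (nhdsWithin_mono z hSsub)
      obtain ⟨y, h1, h2⟩ := (hev'.and hmemS).exists
      exact absurd h2.2 (not_le.2 h1)
    · have hzfr : z ∈ frontier Ω := by
        rw [hΩopen.frontier_eq]; exact ⟨hzΩcl, hzΩ⟩
      have hε : (0:ℝ) < -m := by linarith
      have hev := hbdry z hzfr (-m) hε
      have hev2 : ∀ᶠ y in 𝓝[Ω] z, m < v y := by
        filter_upwards [hev, eventually_mem_nhdsWithin] with y hy hyΩ
        have hφy := hφneg y hyΩ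
        rw [neg_neg] at hy
        rw [hv]; dsimp only
        linarith
      have hev' : ∀ᶠ y in 𝓝[S] z, m < v y := hev2.filter_mono (nhdsWithin_mono z hSsub)
      obtain ⟨y, h1, h2⟩ := (hev'.and hmemS).exists
      exact absurd h2.2 (not_le.2 h1)
  have hScomp : IsCompact S := by
    refine (isCompact_closedBall (0 : EuclideanSpace ℝ (Fin N)) R).of_isClosed_subset hScl ?_
    exact fun y hy => ball_subset_closedBall (hΩsub (hSsub hy))
  have hSne : S.Nonempty := ⟨x₀, hx₀, le_rfl⟩
  obtain ⟨x₁, hx₁S, hx₁min⟩ := lsc_exists_min hScomp hSne (hvlsc.mono hSsub)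
  have hx₁Ω : x₁ ∈ Ω := hSsub hx₁S
  have hmin : ∀ y ∈ Ω, v x₁ ≤ v y := by
    intro y hy
    by_cases h : v y ≤ m
    · exact hx₁min y ⟨hy, h⟩
    · push_neg at h
      exact le_trans (hx₁min x₀ ⟨hx₀, le_rfl⟩) h.le
  have hloc : IsLocalMinOn (fun x => u x - φ x) Ω x₁ :=
    eventually_nhdsWithin_of_forall hmin
  have hC2 : ContDiffAt ℝ 2 φ x₁ := by
    rw [hφ]; exact (quad_contDiff c R).contDiffAt
  have hsup := hsuper x₁ hx₁Ω φ hC2 hloc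
  have hP : Pminus k φ x₁ = 2 * c * k := by
    unfold Pminus
    rw [hφ]
    exact pminus_quad k hkN.le c R x₁
  have hG : gradient φ x₁ = (2*c) • x₁ := by
    rw [hφ]; exact quad_gradient c R x₁
  have hx₁R : ‖x₁‖ < R := by simpa [mem_ball_zero_iff] using hΩsub hx₁Ω
  have hHb : |H x₁ ((2*c) • x₁)| ≤ b * (2*c*‖x₁‖) := by
    have h := hSC1 x₁ hx₁Ω ((2*c) • x₁)
    have hn : ‖(2*c) • x₁‖ = 2*c*‖x₁‖ := by
      rw [norm_smul, Real.norm_eq_abs, abs_of_pos (by linarith : (0:ℝ) < 2*c)]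
    rwa [hn] at h
  rw [hP, hG] at hsup
  simp only [zero_mul, add_zero] at hsup
  have hHlow : -(b*(2*c*‖x₁‖)) ≤ H x₁ ((2*c) • x₁) := neg_le_of_abs_le hHb
  have hk1' : (1:ℝ) ≤ (k:ℝ) := by exact_mod_cast hk1
  have hxn : 0 ≤ ‖x₁‖ := norm_nonneg x₁
  rcases eq_or_lt_of_le hb with hb0 | hb0
  · rw [← hb0] at hHlow
    norm_num at hHlow
    nlinarith [mul_nonneg hc0.le (sub_nonneg.2 hk1')]
  · have hbx : b * ‖x₁‖ < b * R := mul_lt_mul_of_pos_left hx₁R hb0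
    nlinarith
end

section
/- Let N ≥ 2, 1 ≤ k < N, R > 0, b ≥ 0 with bR ≤ k, and γ > 1. The function w(x) = (R² − |x|²)^γ on the closed ball cl(B_R(0)) ⊂ ℝ^N is C² in B_R(0), satisfies w > 0 in B_R(0), w = 0 and ∇w = 0 on ∂B_R(0), and satisfies the pointwise inequality 𝒫⁻ₖ(D²w(x)) + b|∇w(x)| ≤ 0 for every x ∈ B_R(0). In particular, the Hopf lemma fails for the operator 𝒫⁻ₖ(D²·) + b|∇·|: there is a positive classical supersolution in B_R(0) vanishing on ∂B_R(0) together with its gradient. -/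
open Metric Filter Topology Set

section AuxStatement1

open Module

local notation "⟪" x ", " y "⟫" => @inner ℝ _ _ x y



variable {N : ℕ}

/-- Orthonormal k-frame orthogonal to a given vector. -/
lemma exists_orth_frame (k : ℕ) (hkN : k < N) (x : EuclideanSpace ℝ (Fin N)) :
    ∃ ξ : Fin k → EuclideanSpace ℝ (Fin N), Orthonormal ℝ ξ ∧ ∀ i, ⟪x, ξ i⟫ = 0 := by
  have hrank : k ≤ finrank ℝ ((ℝ ∙ x)ᗮ : Submodule ℝ (EuclideanSpace ℝ (Fin N))) := by
    have h1 : finrank ℝ (ℝ ∙ x : Submodule ℝ (EuclideanSpace ℝ (Fin N))) ≤ 1 := by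
      rcases eq_or_ne x 0 with rfl | hx
      · rw [Submodule.span_zero_singleton]; simp [finrank_bot]
      · simp [finrank_span_singleton hx]
    have h2 := Submodule.finrank_add_finrank_orthogonal (𝕜 := ℝ) (ℝ ∙ x)
    rw [finrank_euclideanSpace_fin] at h2
    omega
  let b := stdOrthonormalBasis ℝ ((ℝ ∙ x)ᗮ : Submodule ℝ (EuclideanSpace ℝ (Fin N)))
  refine ⟨fun i => (b (Fin.castLE hrank i) : EuclideanSpace ℝ (Fin N)), ?_, ?_⟩
  · have h1 : Orthonormal ℝ (fun i : Fin k => b (Fin.castLE hrank i)) :=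
      b.orthonormal.comp _ (Fin.castLE_injective hrank)
    exact h1.comp_linearIsometry ((ℝ ∙ x)ᗮ : Submodule ℝ (EuclideanSpace ℝ (Fin N))).subtypeₗᵢ
  · intro i
    have hmem : ((b (Fin.castLE hrank i)) : EuclideanSpace ℝ (Fin N)) ∈ (ℝ ∙ x)ᗮ :=
      (b (Fin.castLE hrank i)).2
    exact (Submodule.mem_orthogonal _ _).1 hmem x (Submodule.mem_span_singleton_self x)

variable {R γ : ℝ}

lemma hasFDerivAt_w (hγ : 1 < γ) (x : EuclideanSpace ℝ (Fin N)) :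
    HasFDerivAt (fun y : EuclideanSpace ℝ (Fin N) => (R ^ 2 - ‖y‖ ^ 2) ^ γ)
      ((γ * (R ^ 2 - ‖x‖ ^ 2) ^ (γ - 1)) • ((0 : EuclideanSpace ℝ (Fin N) →L[ℝ] ℝ)
        - 2 • (innerSL ℝ x))) x := by
  have hg : HasFDerivAt (fun y : EuclideanSpace ℝ (Fin N) => R ^ 2 - ‖y‖ ^ 2)
      ((0 : EuclideanSpace ℝ (Fin N) →L[ℝ] ℝ) - 2 • (innerSL ℝ x)) x :=
    (hasFDerivAt_const (R ^ 2) x).sub ((hasStrictFDerivAt_norm_sq x).hasFDerivAt)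
  exact (Real.hasDerivAt_rpow_const (x := R ^ 2 - ‖x‖ ^ 2) (p := γ)
    (Or.inr hγ.le)).comp_hasFDerivAt x hg

lemma hasGradientAt_w (hγ : 1 < γ) (x : EuclideanSpace ℝ (Fin N)) :
    HasGradientAt (fun y : EuclideanSpace ℝ (Fin N) => (R ^ 2 - ‖y‖ ^ 2) ^ γ)
      ((-(2 * γ) * (R ^ 2 - ‖x‖ ^ 2) ^ (γ - 1)) • x) x := by
  rw [hasGradientAt_iff_hasFDerivAt]
  refine (hasFDerivAt_w hγ x).congr_fderiv ?_
  ext v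
  simp [InnerProductSpace.toDual_apply_apply, innerSL_apply_apply, inner_smul_left, real_inner_comm]
  ring

lemma fderiv_w_apply (hγ : 1 < γ) (y ξ : EuclideanSpace ℝ (Fin N)) :
    fderiv ℝ (fun z : EuclideanSpace ℝ (Fin N) => (R ^ 2 - ‖z‖ ^ 2) ^ γ) y ξ
      = (-(2 * γ) * (R ^ 2 - ‖y‖ ^ 2) ^ (γ - 1)) * ⟪ξ, y⟫ := by
  rw [(hasFDerivAt_w hγ y).fderiv]
  have hc : ⟪y, ξ⟫ = ⟪ξ, y⟫ := real_inner_comm ξ y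
  simp only [ContinuousLinearMap.coe_smul', Pi.smul_apply, ContinuousLinearMap.sub_apply,
    ContinuousLinearMap.zero_apply, ContinuousLinearMap.smul_apply, innerSL_apply_apply,
    smul_eq_mul, hc]
  ring

lemma contDiffAt_w {x : EuclideanSpace ℝ (Fin N)} (ht : R ^ 2 - ‖x‖ ^ 2 ≠ 0) :
    ContDiffAt ℝ 2 (fun y : EuclideanSpace ℝ (Fin N) => (R ^ 2 - ‖y‖ ^ 2) ^ γ) x := by
  have hg : ContDiffAt ℝ 2 (fun y : EuclideanSpace ℝ (Fin N) => R ^ 2 - ‖y‖ ^ 2) x :=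
    (contDiff_const.sub (contDiff_norm_sq ℝ)).contDiffAt
  exact (Real.contDiffAt_rpow_const_of_ne ht).comp x hg

lemma hessian_w_apply (hγ : 1 < γ) {x : EuclideanSpace ℝ (Fin N)}
    (ht : R ^ 2 - ‖x‖ ^ 2 ≠ 0) {ξ : EuclideanSpace ℝ (Fin N)}
    (hξx : ⟪x, ξ⟫ = 0) (hξ : ‖ξ‖ = 1) :
    iteratedFDeriv ℝ 2 (fun y : EuclideanSpace ℝ (Fin N) => (R ^ 2 - ‖y‖ ^ 2) ^ γ) x ![ξ, ξ]
      = -(2 * γ) * (R ^ 2 - ‖x‖ ^ 2) ^ (γ - 1) := by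
  set w := fun y : EuclideanSpace ℝ (Fin N) => (R ^ 2 - ‖y‖ ^ 2) ^ γ with hw
  have hd : DifferentiableAt ℝ (fderiv ℝ w) x :=
    ((contDiffAt_w ht).fderiv_right (m := 1) (by norm_num)).differentiableAt one_ne_zero
  -- derivative of the coefficient c y = -(2γ) (R² - ‖y‖²)^(γ-1)
  have hg : HasFDerivAt (fun y : EuclideanSpace ℝ (Fin N) => R ^ 2 - ‖y‖ ^ 2)
      ((0 : EuclideanSpace ℝ (Fin N) →L[ℝ] ℝ) - 2 • (innerSL ℝ x)) x :=
    (hasFDerivAt_const (R ^ 2) x).sub ((hasStrictFDerivAt_norm_sq x).hasFDerivAt)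
  have hc : HasFDerivAt (fun y : EuclideanSpace ℝ (Fin N) =>
      -(2 * γ) * (R ^ 2 - ‖y‖ ^ 2) ^ (γ - 1))
      ((-(2 * γ)) • (((γ - 1) * (R ^ 2 - ‖x‖ ^ 2) ^ (γ - 1 - 1)) •
        ((0 : EuclideanSpace ℝ (Fin N) →L[ℝ] ℝ) - 2 • (innerSL ℝ x)))) x :=
    ((Real.hasDerivAt_rpow_const (Or.inl ht)).comp_hasFDerivAt x hg).const_mul (-(2 * γ))
  have hinner : HasFDerivAt (fun y : EuclideanSpace ℝ (Fin N) => ⟪ξ, y⟫)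
      (innerSL ℝ ξ) x := (innerSL ℝ ξ).hasFDerivAt
  have hmul := hc.mul hinner
  have key : (fun y : EuclideanSpace ℝ (Fin N) => fderiv ℝ w y ξ)
      = fun y => (-(2 * γ) * (R ^ 2 - ‖y‖ ^ 2) ^ (γ - 1)) * ⟪ξ, y⟫ :=
    funext fun y => fderiv_w_apply hγ y ξ
  have happ := fderiv_clm_apply (𝕜 := ℝ) hd (differentiableAt_const ξ)
  have hξξ : ⟪ξ, ξ⟫ = (1 : ℝ) := by
    rw [real_inner_self_eq_norm_sq, hξ]; norm_num
  have hξx' : ⟪ξ, x⟫ = (0 : ℝ) := by rw [real_inner_comm]; exact hξx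
  rw [iteratedFDeriv_two_apply]
  have h1 : fderiv ℝ (fun y : EuclideanSpace ℝ (Fin N) => (fderiv ℝ w y) ξ) x
      = (fderiv ℝ w x).comp (fderiv ℝ (fun _ : EuclideanSpace ℝ (Fin N) => ξ) x)
        + (fderiv ℝ (fderiv ℝ w) x).flip ξ := happ
  have h2 : fderiv ℝ (fun y : EuclideanSpace ℝ (Fin N) => (fderiv ℝ w y) ξ) x
      = fderiv ℝ (fun y => (-(2 * γ) * (R ^ 2 - ‖y‖ ^ 2) ^ (γ - 1)) * ⟪ξ, y⟫) x := by
    rw [← key]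
  have h3 : fderiv ℝ (fun y : EuclideanSpace ℝ (Fin N) => (-(2 * γ) * (R ^ 2 - ‖y‖ ^ 2) ^ (γ - 1)) * ⟪ξ, y⟫) x = _ :=
    hmul.fderiv
  rw [h2, h3] at h1
  have h4 : (fderiv ℝ (fderiv ℝ w) x) ξ ξ
      = ((-(2 * γ) * (R ^ 2 - ‖x‖ ^ 2) ^ (γ - 1)) • innerSL ℝ ξ
        + ⟪ξ, x⟫ • ((-(2 * γ)) • (((γ - 1) * (R ^ 2 - ‖x‖ ^ 2) ^ (γ - 1 - 1)) •
          ((0 : EuclideanSpace ℝ (Fin N) →L[ℝ] ℝ) - 2 • (innerSL ℝ x))))) ξ := by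
    have := congrArg (fun (L : EuclideanSpace ℝ (Fin N) →L[ℝ] ℝ) => L ξ) h1.symm
    simpa [fderiv_const] using this
  simp only [Matrix.cons_val_zero, Matrix.cons_val_one, Matrix.head_cons]
  rw [h4]
  simp only [ContinuousLinearMap.add_apply, ContinuousLinearMap.smul_apply, smul_eq_mul,
    innerSL_apply_apply, hξξ, hξx', mul_one, zero_smul, zero_mul, ContinuousLinearMap.zero_apply,
    add_zero]


end AuxStatement1

/-- the function `w(x) = (R² - |x|²)^γ`, `γ > 1`, is a positive classical
supersolution of `𝒫⁻ₖ(D²w) + b|∇w| = 0` in `B_R(0)` vanishing on `∂B_R(0)` together with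
its gradient; in particular the Hopf lemma fails for `𝒫⁻ₖ(D²·) + b|∇·|`. -/
theorem statement1 {N : ℕ} (hN : 2 ≤ N) (k : ℕ) (hk1 : 1 ≤ k) (hkN : k < N)
    (R b γ : ℝ) (hR : 0 < R) (hb : 0 ≤ b) (hbR : b * R ≤ (k : ℝ)) (hγ : 1 < γ) :
    ContDiffOn ℝ 2 (fun x : EuclideanSpace ℝ (Fin N) => (R ^ 2 - ‖x‖ ^ 2) ^ γ)
      (ball (0 : EuclideanSpace ℝ (Fin N)) R) ∧
    (∀ x ∈ ball (0 : EuclideanSpace ℝ (Fin N)) R, (0 : ℝ) < (R ^ 2 - ‖x‖ ^ 2) ^ γ) ∧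
    (∀ x ∈ sphere (0 : EuclideanSpace ℝ (Fin N)) R,
      ((R ^ 2 - ‖x‖ ^ 2) ^ γ : ℝ) = 0 ∧
      HasGradientAt (fun x : EuclideanSpace ℝ (Fin N) => (R ^ 2 - ‖x‖ ^ 2) ^ γ) 0 x) ∧
    (∀ x ∈ ball (0 : EuclideanSpace ℝ (Fin N)) R,
      Pminus k (fun x : EuclideanSpace ℝ (Fin N) => (R ^ 2 - ‖x‖ ^ 2) ^ γ) x
        + b * ‖gradient (fun x : EuclideanSpace ℝ (Fin N) => (R ^ 2 - ‖x‖ ^ 2) ^ γ) x‖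
        ≤ 0) := by
  have hpos : ∀ x ∈ ball (0 : EuclideanSpace ℝ (Fin N)) R, (0:ℝ) < R ^ 2 - ‖x‖ ^ 2 := by
    intro x hx
    have hxR : ‖x‖ < R := mem_ball_zero_iff.1 hx
    have := pow_lt_pow_left₀ hxR (norm_nonneg x) two_ne_zero
    linarith
  refine ⟨?_, ?_, ?_, ?_⟩
  · intro x hx
    exact (contDiffAt_w (hpos x hx).ne').contDiffWithinAt
  · intro x hx
    exact Real.rpow_pos_of_pos (hpos x hx) γ
  · intro x hx
    have hxR : ‖x‖ = R := mem_sphere_zero_iff_norm.1 hx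
    have ht : R ^ 2 - ‖x‖ ^ 2 = 0 := by rw [hxR]; ring
    constructor
    · rw [ht, Real.zero_rpow (by linarith)]
    · have := hasGradientAt_w (R := R) hγ x
      rw [ht, Real.zero_rpow (by intro h; linarith [sub_eq_zero.1 ((sub_eq_zero.2 h.symm))] : γ - 1 ≠ 0)] at this
      simpa using this
  · intro x hx
    have hxR : ‖x‖ < R := mem_ball_zero_iff.1 hx
    have ht : 0 < R ^ 2 - ‖x‖ ^ 2 := by
      have := pow_lt_pow_left₀ hxR (norm_nonneg x) two_ne_zero
      linarith
    set T := (R ^ 2 - ‖x‖ ^ 2) ^ (γ - 1) with hT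
    have hTpos : 0 < T := Real.rpow_pos_of_pos ht _
    -- gradient norm
    have hgrad := (hasGradientAt_w (R := R) hγ x).gradient
    have hgnorm : ‖gradient (fun x : EuclideanSpace ℝ (Fin N) => (R ^ 2 - ‖x‖ ^ 2) ^ γ) x‖
        = 2 * γ * T * ‖x‖ := by
      rw [hgrad, norm_smul, Real.norm_eq_abs, abs_of_nonpos (by nlinarith), ← hT]
      ring
    -- orthonormal frame
    obtain ⟨ξ, hON, horth⟩ := exists_orth_frame k hkN x
    have hterm : ∀ i : Fin k,
        iteratedFDeriv ℝ 2 (fun y : EuclideanSpace ℝ (Fin N) => (R ^ 2 - ‖y‖ ^ 2) ^ γ) x ![ξ i, ξ i]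
          = -(2 * γ) * T := fun i => hessian_w_apply hγ ht.ne' (horth i) (hON.1 i)
    have hbdd : BddBelow {s : ℝ | ∃ η : Fin k → EuclideanSpace ℝ (Fin N), Orthonormal ℝ η ∧
        s = ∑ i, iteratedFDeriv ℝ 2 (fun x : EuclideanSpace ℝ (Fin N) => (R ^ 2 - ‖x‖ ^ 2) ^ γ) x ![η i, η i]} := by
      refine ⟨-(k * ‖iteratedFDeriv ℝ 2 (fun x : EuclideanSpace ℝ (Fin N) => (R ^ 2 - ‖x‖ ^ 2) ^ γ) x‖), ?_⟩
      rintro s ⟨η, hη, rfl⟩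
      set S := iteratedFDeriv ℝ 2 (fun x : EuclideanSpace ℝ (Fin N) => (R ^ 2 - ‖x‖ ^ 2) ^ γ) x with hS
      have : ∀ i : Fin k, -‖S‖ ≤ S ![η i, η i] := by
        intro i
        have h1 := S.le_opNorm ![η i, η i]
        have h2 : ∏ j, ‖(![η i, η i]) j‖ = 1 := by
          rw [Fin.prod_univ_two]
          simp [hη.1 i]
        rw [h2, mul_one] at h1
        have h1' : |S ![η i, η i]| ≤ ‖S‖ := by rwa [Real.norm_eq_abs] at h1
        linarith [(abs_le.1 h1').1]
      calc -((k : ℝ) * ‖S‖) = ∑ _i : Fin k, -‖S‖ := by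
            rw [Finset.sum_const, Finset.card_univ, Fintype.card_fin]
            ring
        _ ≤ ∑ i, S ![η i, η i] := Finset.sum_le_sum fun i _ => this i
    have hPle : sInf {s : ℝ | ∃ η : Fin k → EuclideanSpace ℝ (Fin N), Orthonormal ℝ η ∧
        s = ∑ i, iteratedFDeriv ℝ 2 (fun x : EuclideanSpace ℝ (Fin N) => (R ^ 2 - ‖x‖ ^ 2) ^ γ) x ![η i, η i]}
        ≤ (k : ℝ) * (-(2 * γ) * T) := by
      refine le_trans (csInf_le hbdd ⟨ξ, hON, rfl⟩) ?_
      rw [Finset.sum_congr rfl fun i _ => hterm i, Finset.sum_const, Finset.card_univ,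
        Fintype.card_fin, nsmul_eq_mul]
    unfold Pminus
    rw [hgnorm]
    have hbx : b * ‖x‖ ≤ (k : ℝ) := le_trans (mul_le_mul_of_nonneg_left hxR.le hb) hbR
    nlinarith [mul_le_mul_of_nonneg_left hbx (by positivity : (0:ℝ) ≤ 2 * γ * T)]
end

section
/- Let N ≥ 2, let Ω ⊂ ℝ^N be a bounded open set, let H : Ω × ℝ^N → ℝ be continuous and satisfy (SC1) with constant b, and let m > 0. Suppose u : cl(Ω) → ℝ is bounded, upper semicontinuous, satisfies u ≤ 0 on ∂Ω, and is a viscosity subsolution of 𝒫⁻₁(D²u) + H(x,∇u) = −m in Ω (that is, 𝒫⁻₁(D²u) + H(x,∇u) ≥ −m in the viscosity sense). Then for every γ ∈ (0,1) there exists a constant C, depending only on γ, b, m and sup_Ω u⁺, such that u(x) ≤ C d(x)^γ for all x ∈ cl(Ω). -/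
open Metric Filter Topology Set

-- usc attains max on compact
theorem usc_isMaxOn {X : Type*} [TopologicalSpace X] {K : Set X} (hK : IsCompact K)
    (hne : K.Nonempty) {f : X → ℝ} (hf : UpperSemicontinuousOn f K) :
    ∃ x₀ ∈ K, ∀ x ∈ K, f x ≤ f x₀ := by
  by_contra hcon
  push_neg at hcon
  choose g hgK hgf using hcon
  have hU : ∀ x (hx : x ∈ K), ∃ U : Set X, IsOpen U ∧ x ∈ U ∧
      ∀ z ∈ U ∩ K, f z < f (g x hx) := by
    intro x hx
    have := hf x hx (f (g x hx)) (hgf x hx)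
    rcases mem_nhdsWithin.1 this with ⟨U, hUo, hxU, hUsub⟩
    exact ⟨U, hUo, hxU, fun z hz => hUsub hz⟩
  choose U hUo hxU hUsub using hU
  obtain ⟨t, ht⟩ := hK.elim_nhds_subcover' U (fun x hx => (hUo x hx).mem_nhds (hxU x hx))
  have htne : t.Nonempty := by
    obtain ⟨z, hz⟩ := hne
    rcases mem_iUnion₂.1 (ht hz) with ⟨i, hi, _⟩
    exact ⟨i, hi⟩
  obtain ⟨j, hjt, hjmax⟩ := t.exists_max_image (fun x => f (g x.1 x.2)) htne
  have hgj : g j.1 j.2 ∈ K := hgK j.1 j.2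
  rcases mem_iUnion₂.1 (ht hgj) with ⟨i, hit, hgi⟩
  have h1 : f (g j.1 j.2) < f (g i.1 i.2) := hUsub i.1 i.2 _ ⟨hgi, hgj⟩
  exact absurd (hjmax i hit) (not_le.2 h1)

section AuxBarrier
variable {N : ℕ}

noncomputable def barrier (C γ : ℝ) (y z : EuclideanSpace ℝ (Fin N)) : ℝ :=
  C * (‖z - y‖ ^ 2) ^ (γ / 2 : ℝ)

lemma sq_rpow' {a : ℝ} (ha : 0 ≤ a) (p : ℝ) : ((a ^ 2 : ℝ)) ^ p = a ^ (2 * p) := by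
  rw [← Real.rpow_natCast a 2, ← Real.rpow_mul ha]
  norm_num

lemma barrier_eq (C γ : ℝ) (y z : EuclideanSpace ℝ (Fin N)) :
    barrier C γ y z = C * ‖z - y‖ ^ (γ : ℝ) := by
  rw [barrier, sq_rpow' (norm_nonneg _)]
  ring_nf

lemma barrier_nonneg {C : ℝ} (hC : 0 ≤ C) (γ : ℝ) (y z : EuclideanSpace ℝ (Fin N)) :
    0 ≤ barrier C γ y z := by
  rw [barrier]; positivity

lemma barrier_contDiffAt {C γ : ℝ} {y z : EuclideanSpace ℝ (Fin N)} (hz : z ≠ y) :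
    ContDiffAt ℝ 2 (barrier C γ y) z := by
  have h0 : (‖z - y‖ ^ 2 : ℝ) ≠ 0 := by
    have h : z - y ≠ 0 := sub_ne_zero.mpr hz
    have := norm_pos_iff.mpr h
    positivity
  have h1 : ContDiffAt ℝ 2 (fun w : EuclideanSpace ℝ (Fin N) => ‖w - y‖ ^ 2) z :=
    ((contDiff_id.sub contDiff_const).norm_sq (𝕜 := ℝ)).contDiffAt
  exact contDiffAt_const.mul (h1.rpow_const_of_ne h0)

lemma barrier_hasFDerivAt {C γ : ℝ} {y z : EuclideanSpace ℝ (Fin N)} (hz : z ≠ y) :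
    HasFDerivAt (barrier C γ y)
      ((C * γ * (‖z - y‖ ^ 2) ^ (γ / 2 - 1 : ℝ)) • innerSL ℝ (z - y)) z := by
  have h0 : (‖z - y‖ ^ 2 : ℝ) ≠ 0 := by
    have h : z - y ≠ 0 := sub_ne_zero.mpr hz
    have := norm_pos_iff.mpr h
    positivity
  have hq : HasFDerivAt (fun w : EuclideanSpace ℝ (Fin N) => ‖w - y‖ ^ 2)
      (2 • (innerSL ℝ (z - y)).comp (ContinuousLinearMap.id ℝ _)) z :=
    ((hasFDerivAt_id z).sub_const y).norm_sq
  have hh : HasDerivAt (fun s : ℝ => s ^ (γ / 2 : ℝ))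
      ((γ / 2) * (‖z - y‖ ^ 2) ^ (γ / 2 - 1 : ℝ)) (‖z - y‖ ^ 2) :=
    Real.hasDerivAt_rpow_const (Or.inl h0)
  have := (hh.comp_hasFDerivAt z hq).const_mul C
  refine this.congr_fderiv ?_
  ext v
  simp [ContinuousLinearMap.smul_apply, smul_smul]
  ring

lemma barrier_grad_norm {C γ : ℝ} {y z : EuclideanSpace ℝ (Fin N)} (hz : z ≠ y)
    (hC : 0 ≤ C) (hγ : 0 ≤ γ) :
    ‖gradient (barrier C γ y) z‖ = C * γ * ‖z - y‖ ^ (γ - 1 : ℝ) := by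
  have hr : (0:ℝ) < ‖z - y‖ := norm_pos_iff.mpr (sub_ne_zero.mpr hz)
  have hf := (barrier_hasFDerivAt (C := C) (γ := γ) hz).fderiv
  have h2 : ‖gradient (barrier C γ y) z‖ = ‖fderiv ℝ (barrier C γ y) z‖ :=
    LinearIsometryEquiv.norm_map _ _
  rw [h2, hf, norm_smul, innerSL_apply_norm, sq_rpow' (norm_nonneg _)]
  rw [Real.norm_eq_abs]
  rw [abs_of_nonneg (by positivity), show (γ - 1 : ℝ) = 2 * (γ / 2 - 1) + 1 by ring,
    Real.rpow_add_one hr.ne']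
  ring

lemma barrier_second {C γ : ℝ} {y z : EuclideanSpace ℝ (Fin N)} (hz : z ≠ y) :
    iteratedFDeriv ℝ 2 (barrier C γ y) z
      ![‖z - y‖⁻¹ • (z - y), ‖z - y‖⁻¹ • (z - y)] = C * γ * (γ - 1) * ‖z - y‖ ^ (γ - 2 : ℝ) := by
  have hr : (0:ℝ) < ‖z - y‖ := norm_pos_iff.mpr (sub_ne_zero.mpr hz)
  have h0 : (‖z - y‖ ^ 2 : ℝ) ≠ 0 := by positivity
  set e : EuclideanSpace ℝ (Fin N) := ‖z - y‖⁻¹ • (z - y) with he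
  -- differentiability of the first derivative
  have hC2 : ContDiffAt ℝ 2 (barrier C γ y) z := barrier_contDiffAt hz
  have hd1 : DifferentiableAt ℝ (fderiv ℝ (barrier C γ y)) z := by
    have := hC2.fderiv_right (m := 1) (by norm_num)
    exact this.differentiableAt (by norm_num)
  -- step 1: reduce to a scalar function
  have step1 : iteratedFDeriv ℝ 2 (barrier C γ y) z ![e, e]
      = fderiv ℝ (fun w => fderiv ℝ (barrier C γ y) w e) z e := by
    rw [iteratedFDeriv_two_apply]
    have := fderiv_clm_apply (c := fun w => fderiv ℝ (barrier C γ y) w)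
      (u := fun _ => e) hd1 (differentiableAt_const e)
    rw [this]
    simp
  rw [step1]
  -- the scalar function agrees with an explicit one near z
  set g : EuclideanSpace ℝ (Fin N) → ℝ :=
    fun w => C * γ * (‖w - y‖ ^ 2) ^ (γ / 2 - 1 : ℝ) with hgdef
  set L : EuclideanSpace ℝ (Fin N) → ℝ := fun w => (innerSL ℝ e) (w - y) with hLdef
  have hev : (fun w => fderiv ℝ (barrier C γ y) w e) =ᶠ[𝓝 z] (fun w => g w * L w) := by
    filter_upwards [isOpen_compl_singleton.mem_nhds hz] with w hw
    rw [(barrier_hasFDerivAt hw).fderiv]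
    simp only [ContinuousLinearMap.smul_apply, innerSL_apply_apply, smul_eq_mul, hgdef, hLdef]
    rw [real_inner_comm]
  -- derivative of g
  have hq : HasFDerivAt (fun w : EuclideanSpace ℝ (Fin N) => ‖w - y‖ ^ 2)
      (2 • (innerSL ℝ (z - y)).comp (ContinuousLinearMap.id ℝ _)) z :=
    ((hasFDerivAt_id z).sub_const y).norm_sq
  have hg : HasFDerivAt g
      ((C * γ * ((γ / 2 - 1) * (‖z - y‖ ^ 2) ^ (γ / 2 - 1 - 1 : ℝ))) •
        (2 • (innerSL ℝ (z - y)).comp (ContinuousLinearMap.id ℝ _))) z := by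
    have hh : HasDerivAt (fun s : ℝ => s ^ (γ / 2 - 1 : ℝ))
        ((γ / 2 - 1) * (‖z - y‖ ^ 2) ^ (γ / 2 - 1 - 1 : ℝ)) (‖z - y‖ ^ 2) :=
      Real.hasDerivAt_rpow_const (Or.inl h0)
    have := (hh.comp_hasFDerivAt z hq).const_mul (C * γ)
    exact this.congr_fderiv (by rw [smul_smul])
  -- derivative of L
  have hL : HasFDerivAt L (innerSL ℝ e) z := by
    have h1 : HasFDerivAt (fun w : EuclideanSpace ℝ (Fin N) => w - y)
        (ContinuousLinearMap.id ℝ _) z := (hasFDerivAt_id z).sub_const y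
    have := (innerSL ℝ e).hasFDerivAt.comp z h1
    simp only [ContinuousLinearMap.comp_id] at this
    exact this
  have hGL : HasFDerivAt (fun w => g w * L w)
      (g z • innerSL ℝ e +
        L z • ((C * γ * ((γ / 2 - 1) * (‖z - y‖ ^ 2) ^ (γ / 2 - 1 - 1 : ℝ))) •
          (2 • (innerSL ℝ (z - y)).comp (ContinuousLinearMap.id ℝ _)))) z := hg.mul hL
  rw [hev.fderiv_eq, hGL.fderiv]
  -- now compute the value
  simp only [ContinuousLinearMap.add_apply, ContinuousLinearMap.smul_apply,
    ContinuousLinearMap.comp_apply, ContinuousLinearMap.coe_id', id_eq,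
    innerSL_apply_apply, smul_eq_mul, he, hLdef, hgdef,
    inner_smul_left, inner_smul_right, RCLike.star_def, conj_trivial]
  rw [real_inner_self_eq_norm_sq]
  have e1 : (‖z - y‖ ^ 2 : ℝ) ^ (γ / 2 - 1 : ℝ) = ‖z - y‖ ^ (γ - 2 : ℝ) := by
    rw [sq_rpow' (norm_nonneg _)]; ring_nf
  have e2 : (‖z - y‖ ^ 2 : ℝ) ^ (γ / 2 - 1 - 1 : ℝ) = ‖z - y‖ ^ (γ - 4 : ℝ) := by
    rw [sq_rpow' (norm_nonneg _)]; ring_nf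
  have f2 : ‖z - y‖ ^ (γ - 2 : ℝ) = ‖z - y‖ ^ (γ : ℝ) / ‖z - y‖ ^ 2 := by
    rw [Real.rpow_sub hr, show ((2:ℝ)) = ((2:ℕ):ℝ) by norm_num, Real.rpow_natCast]
  have f4 : ‖z - y‖ ^ (γ - 4 : ℝ) = ‖z - y‖ ^ (γ : ℝ) / ‖z - y‖ ^ 4 := by
    rw [Real.rpow_sub hr, show ((4:ℝ)) = ((4:ℕ):ℝ) by norm_num, Real.rpow_natCast]
  rw [e1, e2, f2, f4]
  field_simp
  ring

end AuxBarrier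

lemma Pminus_le_dir {N : ℕ} (φ : EuclideanSpace ℝ (Fin N) → ℝ)
    (x e : EuclideanSpace ℝ (Fin N)) (he : ‖e‖ = 1) :
    Pminus 1 φ x ≤ iteratedFDeriv ℝ 2 φ x ![e, e] := by
  have hmem : iteratedFDeriv ℝ 2 φ x ![e, e] ∈
      {s : ℝ | ∃ ξ : Fin 1 → EuclideanSpace ℝ (Fin N), Orthonormal ℝ ξ ∧
        s = ∑ i, iteratedFDeriv ℝ 2 φ x ![ξ i, ξ i]} := by
    refine ⟨fun _ => e, ?_, by simp⟩
    rw [orthonormal_iff_ite]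
    intro i j
    have hij : i = j := Subsingleton.elim i j
    subst hij
    rw [if_pos rfl, real_inner_self_eq_norm_sq, he]
    norm_num
  refine csInf_le ⟨-‖iteratedFDeriv ℝ 2 φ x‖, ?_⟩ hmem
  rintro s ⟨ξ, hξ, rfl⟩
  rw [Fin.sum_univ_one]
  have h1 : ‖ξ 0‖ = 1 := hξ.1 0
  have h2 := (iteratedFDeriv ℝ 2 φ x).le_opNorm ![ξ 0, ξ 0]
  have h3 : (∏ i, ‖(![ξ 0, ξ 0] : Fin 2 → EuclideanSpace ℝ (Fin N)) i‖) = 1 := by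
    simp [Fin.prod_univ_two, h1]
  rw [h3, mul_one, Real.norm_eq_abs] at h2
  have := neg_abs_le (iteratedFDeriv ℝ 2 φ x ![ξ 0, ξ 0])
  linarith

set_option maxHeartbeats 1000000 in
/-- Hölder-type upper barrier: a bounded subsolution of
`𝒫⁻₁(D²u) + H(x,∇u) = -m` which is `≤ 0` on `∂Ω` satisfies `u ≤ C d^γ` for every
`γ ∈ (0,1)`. -/
theorem statement3 {N : ℕ} (hN : 2 ≤ N)
    (Ω : Set (EuclideanSpace ℝ (Fin N))) (hΩopen : IsOpen Ω)
    (hΩbdd : Bornology.IsBounded Ω)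
    (H : EuclideanSpace ℝ (Fin N) → EuclideanSpace ℝ (Fin N) → ℝ) (b : ℝ) (hb : 0 ≤ b)
    (hHcont : ContinuousOn (Function.uncurry H)
      (Ω ×ˢ (univ : Set (EuclideanSpace ℝ (Fin N)))))
    (hSC1 : SC1 Ω H b)
    (m : ℝ) (hm : 0 < m)
    (u : EuclideanSpace ℝ (Fin N) → ℝ)
    (hubdd : ∃ M : ℝ, ∀ x ∈ closure Ω, |u x| ≤ M)
    (husc : UpperSemicontinuousOn u (closure Ω))
    (hbdry : ∀ x ∈ frontier Ω, u x ≤ 0)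
    (hsub : IsViscSubsol (Pminus 1) Ω H 0 (fun _ => -m) u) :
    ∀ γ ∈ Ioo (0 : ℝ) 1, ∃ C : ℝ,
      ∀ x ∈ closure Ω, u x ≤ C * infDist x (frontier Ω) ^ γ := by
  intro γ hγ
  obtain ⟨hγ0, hγ1⟩ := hγ
  obtain ⟨M₀, hM₀⟩ := hubdd
  set M := max M₀ 0 with hMdef
  have hM0 : 0 ≤ M := le_max_right _ _
  have hMu : ∀ x ∈ closure Ω, u x ≤ M :=
    fun x hx => (le_abs_self _).trans ((hM₀ x hx).trans (le_max_left _ _))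
  rcases Ω.eq_empty_or_nonempty with hΩe | hΩne
  · exact ⟨0, fun x hx => absurd (by rwa [hΩe, closure_empty] at hx) (notMem_empty x)⟩
  set r₀ := (1 - γ) / (2 * (b + 1)) with hr₀def
  have hr₀ : 0 < r₀ := div_pos (by linarith) (by linarith)
  have hrpow2 : 0 < r₀ ^ (γ - 2 : ℝ) := Real.rpow_pos_of_pos hr₀ _
  have hrpowγ : 0 < r₀ ^ (γ : ℝ) := Real.rpow_pos_of_pos hr₀ _
  set C := max (M / r₀ ^ (γ:ℝ)) (2 * (m + 1) / (γ * (1 - γ) * r₀ ^ (γ - 2 : ℝ))) with hCdef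
  have hC0 : 0 ≤ C := le_trans (div_nonneg hM0 hrpowγ.le) (le_max_left _ _)
  have hC1 : M ≤ C * r₀ ^ (γ:ℝ) := by
    have h := le_max_left (M / r₀ ^ (γ:ℝ)) (2 * (m + 1) / (γ * (1 - γ) * r₀ ^ (γ - 2 : ℝ)))
    calc M = (M / r₀ ^ (γ:ℝ)) * r₀ ^ (γ:ℝ) := by field_simp
    _ ≤ C * r₀ ^ (γ:ℝ) := mul_le_mul_of_nonneg_right h hrpowγ.le
  have hdenpos : 0 < γ * (1 - γ) * r₀ ^ (γ - 2 : ℝ) :=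
    mul_pos (mul_pos hγ0 (by linarith)) hrpow2
  have hC2 : 2 * (m + 1) ≤ C * (γ * (1 - γ) * r₀ ^ (γ - 2:ℝ)) := by
    have h := le_max_right (M / r₀ ^ (γ:ℝ)) (2 * (m + 1) / (γ * (1 - γ) * r₀ ^ (γ - 2 : ℝ)))
    calc 2 * (m + 1)
        = (2 * (m + 1) / (γ * (1 - γ) * r₀ ^ (γ - 2:ℝ))) * (γ * (1 - γ) * r₀ ^ (γ - 2:ℝ)) := by
          field_simp
    _ ≤ C * (γ * (1 - γ) * r₀ ^ (γ - 2:ℝ)) := mul_le_mul_of_nonneg_right h hdenpos.le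
  -- the local barrier estimate
  have key : ∀ y ∈ frontier Ω, ∀ z ∈ closure Ω, dist z y ≤ r₀ →
      u z ≤ C * dist z y ^ (γ:ℝ) := by
    intro y hyf z hzcl hdzy
    have hynΩ : y ∉ Ω := by
      rw [hΩopen.frontier_eq] at hyf
      exact hyf.2
    set K := closure Ω ∩ closedBall y r₀ with hK
    have hKc : IsCompact K :=
      (Metric.isCompact_of_isClosed_isBounded isClosed_closure hΩbdd.closure).inter_right
        Metric.isClosed_closedBall
    have hKne : K.Nonempty := ⟨z, hzcl, mem_closedBall.mpr hdzy⟩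
    have hKsub : K ⊆ closure Ω := inter_subset_left
    have hψcont : Continuous (barrier C γ y) := by
      apply continuous_const.mul
      apply Continuous.rpow_const
      · exact ((continuous_id.sub continuous_const).norm.pow 2)
      · intro x
        right
        positivity
    have hvusc : UpperSemicontinuousOn (fun w => u w + -(barrier C γ y w)) K := by
      apply UpperSemicontinuousOn.add (husc.mono hKsub)
      exact (hψcont.neg.continuousOn).upperSemicontinuousOn
    obtain ⟨x₀, hx₀K, hx₀max⟩ := usc_isMaxOn hKc hKne hvusc
    have hzK : z ∈ K := ⟨hzcl, mem_closedBall.mpr hdzy⟩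
    have hbz := hx₀max z hzK
    suffices hle : u x₀ + -(barrier C γ y x₀) ≤ 0 by
      have h1 : u z ≤ barrier C γ y z := by linarith
      calc u z ≤ barrier C γ y z := h1
      _ = C * ‖z - y‖ ^ (γ:ℝ) := barrier_eq _ _ _ _
      _ = C * dist z y ^ (γ:ℝ) := by rw [dist_eq_norm]
    by_contra hpos
    push_neg at hpos
    have hx₀cl : x₀ ∈ closure Ω := hx₀K.1
    have hψ0 : 0 ≤ barrier C γ y x₀ := barrier_nonneg hC0 _ _ _
    have hx₀Ω : x₀ ∈ Ω := by
      have h := hx₀cl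
      rw [closure_eq_interior_union_frontier] at h
      rcases h with h | h
      · rwa [hΩopen.interior_eq] at h
      · exact absurd hpos (by linarith [hbdry x₀ h])
    have hux₀ : u x₀ ≤ M := hMu x₀ hx₀cl
    have hdx₀lt : dist x₀ y < r₀ := by
      rcases lt_or_eq_of_le (mem_closedBall.mp hx₀K.2) with h | h
      · exact h
      · exfalso
        have hψval : barrier C γ y x₀ = C * r₀ ^ (γ:ℝ) := by
          rw [barrier_eq, ← dist_eq_norm, h]
        linarith
    have hx₀ne : x₀ ≠ y := fun h => hynΩ (h ▸ hx₀Ω)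
    have hloc : IsLocalMaxOn (fun w => u w - barrier C γ y w) Ω x₀ := by
      have hball : Metric.ball x₀ (r₀ - dist x₀ y) ∈ 𝓝 x₀ := ball_mem_nhds _ (by linarith)
      show ∀ᶠ w in 𝓝[Ω] x₀, u w - barrier C γ y w ≤ u x₀ - barrier C γ y x₀
      filter_upwards [mem_nhdsWithin_of_mem_nhds hball, self_mem_nhdsWithin] with w hw hwΩ
      have hwK : w ∈ K := by
        refine ⟨subset_closure hwΩ, mem_closedBall.mpr ?_⟩
        have h1 := mem_ball.mp hw
        calc dist w y ≤ dist w x₀ + dist x₀ y := dist_triangle _ _ _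
        _ ≤ r₀ := by linarith
      have := hx₀max w hwK
      linarith
    have hsubres := hsub x₀ hx₀Ω (barrier C γ y) (barrier_contDiffAt hx₀ne) hloc
    set r := ‖x₀ - y‖ with hrdef
    have hr0 : 0 < r := norm_pos_iff.mpr (sub_ne_zero.mpr hx₀ne)
    have hrr₀ : r ≤ r₀ := by rw [hrdef, ← dist_eq_norm]; exact hdx₀lt.le
    have he1 : ‖r⁻¹ • (x₀ - y)‖ = 1 := by
      rw [norm_smul, Real.norm_eq_abs, abs_inv, abs_of_pos hr0, ← hrdef]
      field_simp
    have hP : Pminus 1 (barrier C γ y) x₀ ≤ C * γ * (γ - 1) * r ^ (γ - 2:ℝ) := by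
      have h := Pminus_le_dir (barrier C γ y) x₀ _ he1
      rwa [barrier_second hx₀ne] at h
    have hgrad : ‖gradient (barrier C γ y) x₀‖ = C * γ * r ^ (γ - 1:ℝ) :=
      barrier_grad_norm hx₀ne hC0 hγ0.le
    have hH : H x₀ (gradient (barrier C γ y) x₀) ≤ b * (C * γ * r ^ (γ - 1:ℝ)) := by
      have h := hSC1 x₀ hx₀Ω (gradient (barrier C γ y) x₀)
      rw [hgrad] at h
      exact (le_abs_self _).trans h
    have hA : C * γ * r₀ ^ (γ - 2:ℝ) ≤ C * γ * r ^ (γ - 2:ℝ) := by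
      apply mul_le_mul_of_nonneg_left _ (by positivity : (0:ℝ) ≤ C * γ)
      exact Real.rpow_le_rpow_of_nonpos hr0 hrr₀ (by linarith)
    have hr1 : r ^ (γ - 1:ℝ) = r ^ (γ - 2:ℝ) * r := by
      rw [show (γ - 1:ℝ) = (γ - 2) + 1 by ring, Real.rpow_add_one hr0.ne']
    have hbr : b * r ≤ (1 - γ)/2 := by
      have h1 : b * r ≤ b * r₀ := mul_le_mul_of_nonneg_left hrr₀ hb
      have h2 : b * r₀ ≤ (1 - γ)/2 := by
        rw [hr₀def, mul_div_assoc', div_le_div_iff₀ (by linarith) (by norm_num)]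
        nlinarith
      linarith
    have hmain : Pminus 1 (barrier C γ y) x₀ + H x₀ (gradient (barrier C γ y) x₀)
        + 0 * u x₀ ≤ -(m + 1) := by
      have e1 : C * γ * (γ - 1) * r ^ (γ - 2:ℝ) + b * (C * γ * r ^ (γ - 1:ℝ))
          = (C * γ * r ^ (γ - 2:ℝ)) * ((γ - 1) + b * r) := by rw [hr1]; ring
      have h2 : (γ - 1) + b * r ≤ -((1 - γ)/2) := by linarith
      have h3 : (C * γ * r ^ (γ - 2:ℝ)) * ((γ - 1) + b * r)
          ≤ (C * γ * r ^ (γ - 2:ℝ)) * (-((1 - γ)/2)) :=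
        mul_le_mul_of_nonneg_left h2 (by positivity)
      have h4 : (C * γ * r ^ (γ - 2:ℝ)) * (-((1 - γ)/2))
          ≤ (C * γ * r₀ ^ (γ - 2:ℝ)) * (-((1 - γ)/2)) := by nlinarith
      have h5 : (C * γ * r₀ ^ (γ - 2:ℝ)) * (-((1 - γ)/2)) ≤ -(m + 1) := by nlinarith
      have hsum : Pminus 1 (barrier C γ y) x₀ + H x₀ (gradient (barrier C γ y) x₀)
          ≤ (C * γ * r ^ (γ - 2:ℝ)) * ((γ - 1) + b * r) := by
        rw [← e1]; linarith
      rw [zero_mul, add_zero]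
      linarith
    simp only at hsubres
    linarith
  -- global assembly
  have hne_univ : Ω ≠ univ := by
    intro h
    haveI : Nontrivial (EuclideanSpace ℝ (Fin N)) := by
      refine ⟨⟨0, EuclideanSpace.single ⟨0, by omega⟩ (1:ℝ), fun hcontra => ?_⟩⟩
      have h0 := congrArg (fun v : EuclideanSpace ℝ (Fin N) => v (⟨0, by omega⟩ : Fin N)) hcontra
      simp [EuclideanSpace.single_apply] at h0
    exact NormedSpace.unbounded_univ ℝ (EuclideanSpace ℝ (Fin N)) (h ▸ hΩbdd)
  have hfne : (frontier Ω).Nonempty := nonempty_frontier_iff.mpr ⟨hΩne, hne_univ⟩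
  have hfc : IsCompact (frontier Ω) :=
    Metric.isCompact_of_isClosed_isBounded isClosed_frontier
      (hΩbdd.closure.subset frontier_subset_closure)
  refine ⟨C, fun x hx => ?_⟩
  obtain ⟨y, hyf, hyd⟩ := hfc.exists_infDist_eq_dist hfne x
  by_cases hcase : infDist x (frontier Ω) ≤ r₀
  · have := key y hyf x hx (by rw [← hyd]; exact hcase)
    rwa [← hyd] at this
  · push_neg at hcase
    have h1 : u x ≤ M := hMu x hx
    have h2 : C * r₀ ^ (γ:ℝ) ≤ C * infDist x (frontier Ω) ^ (γ:ℝ) := by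
      apply mul_le_mul_of_nonneg_left _ hC0
      exact Real.rpow_le_rpow hr₀.le hcase.le hγ0.le
    linarith
end

section
/- Let N ≥ 2, 1 ≤ k < N, R > 0, and let Ω ∈ 𝒞_R. Let H : Ω × ℝ^N → ℝ be continuous and satisfy (SC1) with constant b, assume bR < k, and let m > 0. Suppose u : cl(Ω) → ℝ is upper semicontinuous, satisfies u ≤ 0 on ∂Ω, and is a viscosity subsolution of 𝒫⁺ₖ(D²u) + H(x,∇u) = −m in Ω (that is, 𝒫⁺ₖ(D²u) + H(x,∇u) ≥ −m in the viscosity sense). Then u(x) ≤ (2mR/(k − bR)) d(x) for all x ∈ cl(Ω). -/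
open Metric Filter Topology Set

local notation "⟪" x ", " y "⟫" => @inner ℝ _ _ x y

section USC

variable {X : Type*} [TopologicalSpace X]

lemma usc_isClosed_superlevel {s : Set X} (hs : IsClosed s)
    {f : X → ℝ} (hf : UpperSemicontinuousOn f s) (c : ℝ) :
    IsClosed {x ∈ s | c ≤ f x} := by
  apply isClosed_of_closure_subset
  intro x hx
  have hxs : x ∈ s := hs.closure_subset (closure_mono (fun z hz => hz.1) hx)
  refine ⟨hxs, ?_⟩
  by_contra hlt
  push_neg at hlt
  have h1 := hf x hxs c hlt
  have hT : (𝓝[{x ∈ s | c ≤ f x}] x).NeBot := mem_closure_iff_nhdsWithin_neBot.mp hx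
  have h2 : ∀ᶠ x' in 𝓝[{x ∈ s | c ≤ f x}] x, f x' < c :=
    h1.filter_mono (nhdsWithin_mono x fun z hz => hz.1)
  have h3 : ∀ᶠ x' in 𝓝[{x ∈ s | c ≤ f x}] x, c ≤ f x' :=
    eventually_nhdsWithin_of_forall fun z hz => hz.2
  rcases (h2.and h3).exists with ⟨z, h4, h5⟩
  exact absurd h4 (not_lt.2 h5)

lemma usc_exists_max [T2Space X] {s : Set X} (hs : IsCompact s)
    (hne : s.Nonempty) {f : X → ℝ} (hf : UpperSemicontinuousOn f s) :
    ∃ x ∈ s, ∀ z ∈ s, f z ≤ f x := by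
  have hcl : IsClosed s := hs.isClosed
  have hTcl : ∀ c : ℝ, IsClosed {x ∈ s | c ≤ f x} := usc_isClosed_superlevel hcl hf
  have hTc : ∀ c : ℝ, IsCompact {x ∈ s | c ≤ f x} :=
    fun c => hs.of_isClosed_subset (hTcl c) (fun z hz => hz.1)
  haveI : Nonempty s := hne.to_subtype
  have key := IsCompact.nonempty_iInter_of_directed_nonempty_isCompact_isClosed
      (fun i : s => {x ∈ s | f (i : X) ≤ f x}) ?_ (fun i => ⟨i, i.2, le_refl _⟩)
      (fun i => hTc _) (fun i => hTcl _)
  · rcases key with ⟨x, hx⟩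
    simp only [mem_iInter] at hx
    have hxs : x ∈ s := (hx ⟨hne.some, hne.some_mem⟩).1
    exact ⟨x, hxs, fun z hz => (hx ⟨z, hz⟩).2⟩
  · intro i j
    rcases le_total (f (i : X)) (f (j : X)) with h | h
    · exact ⟨j, fun x hx => ⟨hx.1, h.trans hx.2⟩, fun x hx => hx⟩
    · exact ⟨i, fun x hx => hx, fun x hx => ⟨hx.1, h.trans hx.2⟩⟩

end USC

section Barrier

variable {N : ℕ}

noncomputable def BB (c : ℝ) {N : ℕ} :
    EuclideanSpace ℝ (Fin N) →L[ℝ] EuclideanSpace ℝ (Fin N) →L[ℝ] ℝ :=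
  (-(2*c)) • (innerSL ℝ)

lemma BB_apply (c : ℝ) (u v : EuclideanSpace ℝ (Fin N)) :
    BB c u v = -(2*c) * ⟪u, v⟫ := by simp [BB, innerSL_apply_apply]; exact Or.inl rfl

lemma psi_hasFDerivAt (a c : ℝ) (y x : EuclideanSpace ℝ (Fin N)) :
    HasFDerivAt (fun z : EuclideanSpace ℝ (Fin N) => a - c * ⟪z - y, z - y⟫)
      (BB c (x - y)) x := by
  have h1 : HasFDerivAt (fun z : EuclideanSpace ℝ (Fin N) => z - y)
      (ContinuousLinearMap.id ℝ _) x := (hasFDerivAt_id x).sub_const y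
  have h2 := (h1.inner ℝ h1).const_mul c
  have h4 := h2.const_sub a
  refine h4.congr_fderiv ?_
  ext v
  simp only [BB, ContinuousLinearMap.smul_apply, innerSL_apply_apply, ContinuousLinearMap.neg_apply,
    ContinuousLinearMap.comp_apply, ContinuousLinearMap.prod_apply, ContinuousLinearMap.id_apply,
    ContinuousLinearMap.coe_smul', Pi.smul_apply, fderivInnerCLM_apply, smul_eq_mul]
  rw [real_inner_comm v (x - y)]
  rw [show ((innerSL ℝ) (x - y)) v = ⟪x - y, v⟫ from rfl, real_inner_comm v (x - y)]
  ring

lemma psi_contDiff (a c : ℝ) (y : EuclideanSpace ℝ (Fin N)) :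
    ContDiff ℝ 2 (fun z : EuclideanSpace ℝ (Fin N) => a - c * ⟪z - y, z - y⟫) := by
  exact contDiff_const.sub (contDiff_const.mul
    ((contDiff_id.sub contDiff_const).inner ℝ (contDiff_id.sub contDiff_const)))

lemma psi_fderiv (a c : ℝ) (y : EuclideanSpace ℝ (Fin N)) :
    fderiv ℝ (fun z : EuclideanSpace ℝ (Fin N) => a - c * ⟪z - y, z - y⟫)
      = fun x => BB c (x - y) :=
  funext fun x => (psi_hasFDerivAt a c y x).fderiv

lemma psi_iteratedFDeriv (a c : ℝ) (y x ξ : EuclideanSpace ℝ (Fin N)) :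
    iteratedFDeriv ℝ 2 (fun z : EuclideanSpace ℝ (Fin N) => a - c * ⟪z - y, z - y⟫)
      x ![ξ, ξ] = -(2*c) * ⟪ξ, ξ⟫ := by
  rw [iteratedFDeriv_two_apply, psi_fderiv]
  have h3 : HasFDerivAt (fun x : EuclideanSpace ℝ (Fin N) => BB c (x - y)) (BB c) x := by
    have h := ((BB c).hasFDerivAt).comp x ((hasFDerivAt_id x).sub_const y)
    rw [ContinuousLinearMap.comp_id] at h
    exact h
  rw [h3.fderiv]
  simp [BB_apply]

lemma psi_gradient (a c : ℝ) (y x : EuclideanSpace ℝ (Fin N)) :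
    gradient (fun z : EuclideanSpace ℝ (Fin N) => a - c * ⟪z - y, z - y⟫) x
      = (-(2*c)) • (x - y) := by
  have h : HasGradientAt (fun z : EuclideanSpace ℝ (Fin N) => a - c * ⟪z - y, z - y⟫)
      ((-(2*c)) • (x - y)) x := by
    rw [hasGradientAt_iff_hasFDerivAt]
    refine (psi_hasFDerivAt a c y x).congr_fderiv ?_
    ext v
    simp only [InnerProductSpace.toDual_apply_apply, BB, ContinuousLinearMap.smul_apply,
      innerSL_apply_apply, smul_eq_mul]
    rw [real_inner_smul_left]
    rfl
  exact h.gradient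

lemma psi_Pplus {N : ℕ} (k : ℕ) (hkN : k ≤ N) (a c : ℝ)
    (y x : EuclideanSpace ℝ (Fin N)) :
    Pplus k (fun z : EuclideanSpace ℝ (Fin N) => a - c * ⟪z - y, z - y⟫) x
      = -(2*c*k) := by
  have hterm : ∀ ξ : EuclideanSpace ℝ (Fin N), ‖ξ‖ = 1 →
      iteratedFDeriv ℝ 2 (fun z : EuclideanSpace ℝ (Fin N) => a - c * ⟪z - y, z - y⟫)
        x ![ξ, ξ] = -(2*c) := by
    intro ξ hξ
    rw [psi_iteratedFDeriv, real_inner_self_eq_norm_sq, hξ]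
    ring
  have hset : {s : ℝ | ∃ ξ : Fin k → EuclideanSpace ℝ (Fin N), Orthonormal ℝ ξ ∧
      s = ∑ i, iteratedFDeriv ℝ 2
        (fun z : EuclideanSpace ℝ (Fin N) => a - c * ⟪z - y, z - y⟫) x ![ξ i, ξ i]}
      = {-(2*c*k)} := by
    ext s
    simp only [Set.mem_setOf_eq, Set.mem_singleton_iff]
    constructor
    · rintro ⟨ξ, hon, rfl⟩
      rw [Finset.sum_congr rfl fun i _ => hterm (ξ i) (hon.1 i)]
      simp [Finset.sum_const]
      ring
    · rintro rfl
      refine ⟨fun i => (EuclideanSpace.basisFun (Fin N) ℝ) (Fin.castLE hkN i),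
        (EuclideanSpace.basisFun (Fin N) ℝ).orthonormal.comp _ (Fin.castLE_injective hkN), ?_⟩
      have hone : ∀ i : Fin k,
          (iteratedFDeriv ℝ 2 (fun z : EuclideanSpace ℝ (Fin N) => a - c * ⟪z - y, z - y⟫) x)
            ![(EuclideanSpace.basisFun (Fin N) ℝ) (Fin.castLE hkN i),
              (EuclideanSpace.basisFun (Fin N) ℝ) (Fin.castLE hkN i)] = -(2*c) :=
        fun i => hterm _ ((EuclideanSpace.basisFun (Fin N) ℝ).orthonormal.1 _)
      simp only [hone, Finset.sum_const, Finset.card_univ, Fintype.card_fin, nsmul_eq_mul]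
      ring
  rw [Pplus, hset, csSup_singleton]

end Barrier

/-- linear upper barrier in hula hoop domains: if `Ω ∈ 𝒞_R`, `bR < k`, and
`u` is a subsolution of `𝒫⁺ₖ(D²u) + H(x,∇u) = -m` with `u ≤ 0` on `∂Ω`, then
`u(x) ≤ (2mR/(k - bR)) d(x)`. -/
theorem statement4 {N : ℕ} (hN : 2 ≤ N) (k : ℕ) (hk1 : 1 ≤ k) (hkN : k < N)
    (R : ℝ) (hR : 0 < R)
    (Ω : Set (EuclideanSpace ℝ (Fin N))) (hΩ : HulaHoop R Ω)
    (H : EuclideanSpace ℝ (Fin N) → EuclideanSpace ℝ (Fin N) → ℝ) (b : ℝ) (hb : 0 ≤ b)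
    (hHcont : ContinuousOn (Function.uncurry H)
      (Ω ×ˢ (univ : Set (EuclideanSpace ℝ (Fin N)))))
    (hSC1 : SC1 Ω H b) (hbR : b * R < (k : ℝ))
    (m : ℝ) (hm : 0 < m)
    (u : EuclideanSpace ℝ (Fin N) → ℝ)
    (husc : UpperSemicontinuousOn u (closure Ω))
    (hbdry : ∀ x ∈ frontier Ω, u x ≤ 0)
    (hsub : IsViscSubsol (Pplus k) Ω H 0 (fun _ => -m) u) :
    ∀ x ∈ closure Ω,
      u x ≤ (2 * m * R / ((k : ℝ) - b * R)) * infDist x (frontier Ω) := by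
  obtain ⟨Y, hYne, hYeq⟩ := hΩ
  have hkpos : (0:ℝ) < (k:ℝ) := by exact_mod_cast hk1
  have hD : (0:ℝ) < (k:ℝ) - b*R := by linarith
  set c : ℝ := m / ((k:ℝ) - b*R) with hc
  have hcpos : 0 < c := by positivity
  have hck : c * ((k:ℝ) - b*R) = m := by rw [hc]; field_simp
  have hΩball : ∀ y ∈ Y, Ω ⊆ ball y R := by
    intro y hy; rw [hYeq]; exact biInter_subset_of_mem hy
  have hclball : ∀ y ∈ Y, closure Ω ⊆ closedBall y R := fun y hy =>
    (closure_mono (hΩball y hy)).trans closure_ball_subset_closedBall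
  -- Step 1: barrier bound for each y ∈ Y
  have key : ∀ y ∈ Y, ∀ z ∈ closure Ω, u z ≤ c * R^2 - c * ‖z - y‖^2 := by
    intro y hy z hz
    set ψ : EuclideanSpace ℝ (Fin N) → ℝ :=
      fun w => c * R^2 - c * ⟪w - y, w - y⟫ with hψ
    have hcomp : IsCompact (closure Ω) :=
      (isCompact_closedBall y R).of_isClosed_subset isClosed_closure (hclball y hy)
    have hψc : Continuous ψ := (psi_contDiff (c*R^2) c y).continuous
    have husc2 : UpperSemicontinuousOn (fun w => u w - ψ w) (closure Ω) := by
      simp only [sub_eq_add_neg]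
      exact husc.add ((hψc.neg.continuousOn).upperSemicontinuousOn)
    obtain ⟨x₀, hx₀cl, hmax⟩ := usc_exists_max hcomp ⟨z, hz⟩ husc2
    have hub : u x₀ - ψ x₀ ≤ 0 := by
      by_cases hx₀Ω : x₀ ∈ Ω
      · exfalso
        have hloc : IsLocalMaxOn (fun w => u w - ψ w) Ω x₀ :=
          (isMaxOn_iff.mpr fun w hw => hmax w (subset_closure hw)).localize
        have hsb := hsub x₀ hx₀Ω ψ (psi_contDiff (c*R^2) c y).contDiffAt hloc
        have hP : Pplus k ψ x₀ = -(2*c*k) := psi_Pplus k hkN.le (c*R^2) c y x₀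
        have hg : gradient ψ x₀ = (-(2*c)) • (x₀ - y) := psi_gradient (c*R^2) c y x₀
        have hgn : ‖gradient ψ x₀‖ ≤ 2*c*R := by
          rw [hg, norm_smul]
          have h1 : ‖x₀ - y‖ ≤ R := by
            have h2 := hΩball y hy hx₀Ω
            rw [mem_ball, dist_eq_norm] at h2
            linarith
          rw [Real.norm_eq_abs, abs_neg, abs_of_nonneg (by positivity : (0:ℝ) ≤ 2*c)]
          calc 2*c * ‖x₀ - y‖ ≤ 2*c * R :=
                mul_le_mul_of_nonneg_left h1 (by positivity)
            _ = 2*c*R := by ring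
        have hH : H x₀ (gradient ψ x₀) ≤ b * (2*c*R) := by
          have h2 := (abs_le.mp (hSC1 x₀ hx₀Ω (gradient ψ x₀))).2
          calc H x₀ (gradient ψ x₀) ≤ b * ‖gradient ψ x₀‖ := h2
            _ ≤ b * (2*c*R) := mul_le_mul_of_nonneg_left hgn hb
        rw [hP] at hsb
        simp only [zero_mul, add_zero] at hsb
        nlinarith [hsb, hH, hck, hm]
      · have hfr : x₀ ∈ frontier Ω := ⟨hx₀cl, fun h => hx₀Ω (interior_subset h)⟩
        have h1 : u x₀ ≤ 0 := hbdry x₀ hfr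
        have h2 : 0 ≤ ψ x₀ := by
          have h3 : ‖x₀ - y‖ ≤ R := by
            have h4 := hclball y hy hx₀cl
            rw [mem_closedBall, dist_eq_norm] at h4
            linarith
          have h5 : ψ x₀ = c * R^2 - c * ‖x₀ - y‖^2 := by
            simp only [hψ, real_inner_self_eq_norm_sq]
          rw [h5]
          have h6 : 0 ≤ c * ((R - ‖x₀ - y‖) * (R + ‖x₀ - y‖)) :=
            mul_nonneg hcpos.le (mul_nonneg (by linarith) (by positivity))
          nlinarith [h6]
        linarith
    have h6 : u z - ψ z ≤ 0 := le_trans (hmax z hz) hub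
    have h7 : ψ z = c * R^2 - c * ‖z - y‖^2 := by
      simp only [hψ, real_inner_self_eq_norm_sq]
    linarith [h6, h7.le, h7.ge]
  -- Step 2: conclusion
  intro x hx
  have hfr_ne : (frontier Ω).Nonempty := by
    rcases hYne with ⟨y₀, hy₀⟩
    rw [nonempty_frontier_iff]
    refine ⟨by rw [← closure_nonempty_iff]; exact ⟨x, hx⟩, ?_⟩
    intro hquniv
    have hz' : (y₀ + (2*R) • EuclideanSpace.single (⟨0, by omega⟩ : Fin N) (1:ℝ)) ∈ Ω := by
      rw [hquniv]; trivial
    have h2 := hΩball y₀ hy₀ hz'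
    rw [mem_ball] at h2
    have hd : dist (y₀ + (2*R) • EuclideanSpace.single (⟨0, by omega⟩ : Fin N) (1:ℝ)) y₀
        = 2*R := by
      rw [dist_eq_norm, add_sub_cancel_left, norm_smul, EuclideanSpace.norm_single]
      rw [Real.norm_eq_abs, abs_of_pos (by linarith : (0:ℝ) < 2*R)]
      simp
    rw [hd] at h2
    linarith
  have main : ∀ ε > 0, u x ≤ 2*c*R * (infDist x (frontier Ω) + ε) := by
    intro ε hε
    have hlt : infDist x (frontier Ω) < infDist x (frontier Ω) + ε/2 := by linarith
    obtain ⟨z, hzfr, hzd⟩ := (infDist_lt_iff hfr_ne).mp hlt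
    have hyex : ∃ y ∈ Y, R - ε/2 ≤ dist z y := by
      by_contra hcon
      push_neg at hcon
      have hzint : z ∈ interior Ω := by
        rw [mem_interior]
        refine ⟨ball z (ε/2), ?_, isOpen_ball, mem_ball_self (by linarith)⟩
        intro w hw
        rw [hYeq, mem_iInter₂]
        intro y hy
        rw [mem_ball]
        calc dist w y ≤ dist w z + dist z y := dist_triangle _ _ _
          _ < ε/2 + (R - ε/2) := add_lt_add (mem_ball.mp hw) (hcon y hy)
          _ = R := by ring
      exact hzfr.2 hzint
    obtain ⟨y, hyY, hzy⟩ := hyex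
    have hu := key y hyY x hx
    have hnorm : ‖x - y‖ = dist x y := (dist_eq_norm x y).symm
    have htri : dist z y ≤ dist z x + dist x y := dist_triangle _ _ _
    have hcomm : dist z x = dist x z := dist_comm _ _
    have h5 : R - dist x y ≤ infDist x (frontier Ω) + ε := by linarith
    have h6 : u x ≤ 2*c*R*(R - dist x y) := by
      rw [hnorm] at hu
      nlinarith [hu, sq_nonneg (R - dist x y), hcpos]
    calc u x ≤ 2*c*R*(R - dist x y) := h6
      _ ≤ 2*c*R*(infDist x (frontier Ω) + ε) :=
        mul_le_mul_of_nonneg_left h5 (by positivity)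
  have hC : 2 * m * R / ((k:ℝ) - b*R) = 2*c*R := by rw [hc]; ring
  rw [hC]
  refine le_of_forall_sub_le fun ε hε => ?_
  have h := main (ε/(2*c*R)) (by positivity)
  have h2 : 2*c*R*(infDist x (frontier Ω) + ε/(2*c*R))
      = 2*c*R*infDist x (frontier Ω) + ε := by
    field_simp
  linarith [h2 ▸ h]
end

section
/- Let N ≥ 2, R > 0, let Ω ∈ 𝒞_R, let H : Ω × ℝ^N → ℝ be continuous and satisfy (SC1) with constant b, assume bR < 1, and let f : Ω → ℝ be continuous and bounded. If u ∈ C(cl(Ω)) is a viscosity solution of 𝒫⁻₁(D²u) + H(x,∇u) = f(x) in Ω with u = 0 on ∂Ω, then u is Lipschitz continuous on cl(Ω), with Lipschitz constant bounded by a constant depending only on Ω, b, sup|u| and sup|f|. The same conclusion holds for viscosity solutions of 𝒫⁺₁(D²u) + H(x,∇u) = f(x) in Ω with u = 0 on ∂Ω. -/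
open Metric Filter Topology Set

set_option synthInstance.maxHeartbeats 1000000
set_option maxHeartbeats 1000000

open scoped RealInnerProductSpace

section Radial

variable {N : ℕ}

private lemma hasFDerivAt_qsub (z x : EuclideanSpace ℝ (Fin N)) :
    HasFDerivAt (fun w : EuclideanSpace ℝ (Fin N) => ⟪w - z, w - z⟫)
      ((2 : ℝ) • innerSL ℝ (x - z)) x := by
  have hid : HasFDerivAt (fun w : EuclideanSpace ℝ (Fin N) => w - z)
      (ContinuousLinearMap.id ℝ _) x := (hasFDerivAt_id x).sub_const z
  have h := hid.inner ℝ hid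
  refine h.congr_fderiv ?_
  ext v
  simp only [ContinuousLinearMap.smul_apply, innerSL_apply_apply, ContinuousLinearMap.comp_apply,
    ContinuousLinearMap.prod_apply, ContinuousLinearMap.coe_id', id_eq, fderivInnerCLM_apply,
    smul_eq_mul]
  rw [real_inner_comm v (x - z)]
  ring

end Radial


section Radial2
variable {N : ℕ}

private noncomputable def Psi (N : ℕ) :
    EuclideanSpace ℝ (Fin N) →L[ℝ] EuclideanSpace ℝ (Fin N) →L[ℝ] ℝ := innerSL ℝ

@[simp] private lemma Psi_apply (N : ℕ) (v w : EuclideanSpace ℝ (Fin N)) :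
    Psi N v w = ⟪v, w⟫ := rfl

private lemma radial_hessian (z x₀ : EuclideanSpace ℝ (Fin N)) (g g₁ : ℝ → ℝ) (g₂ : ℝ)
    (hg : ∀ᶠ s in 𝓝 (⟪x₀ - z, x₀ - z⟫ : ℝ), HasDerivAt g (g₁ s) s)
    (hg₁ : HasDerivAt g₁ g₂ (⟪x₀ - z, x₀ - z⟫ : ℝ)) :
    (∀ v w : EuclideanSpace ℝ (Fin N),
      iteratedFDeriv ℝ 2 (fun y => g ⟪y - z, y - z⟫) x₀ ![v, w] =
        2 * g₁ ⟪x₀ - z, x₀ - z⟫ * ⟪v, w⟫ + 4 * g₂ * (⟪x₀ - z, v⟫ * ⟪x₀ - z, w⟫)) ∧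
      fderiv ℝ (fun y => g ⟪y - z, y - z⟫) x₀ =
        (2 * g₁ ⟪x₀ - z, x₀ - z⟫) • innerSL ℝ (x₀ - z) := by
  classical
  set q : EuclideanSpace ℝ (Fin N) → ℝ := fun w => ⟪w - z, w - z⟫ with hqdef
  have hqc : Continuous q :=
    (continuous_id.sub continuous_const).inner (continuous_id.sub continuous_const)
  have hev : ∀ᶠ x in 𝓝 x₀, HasDerivAt g (g₁ (q x)) (q x) :=
    (hqc.continuousAt).eventually hg
  have hφev : ∀ᶠ x in 𝓝 x₀,
      HasFDerivAt (fun y => g (q y)) ((2 * g₁ (q x)) • innerSL ℝ (x - z)) x := by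
    filter_upwards [hev] with x hx
    have h1 := hx.comp_hasFDerivAt x (hasFDerivAt_qsub z x)
    have h2 : (2 * g₁ (q x)) • innerSL ℝ (x - z) = g₁ (q x) • ((2:ℝ) • innerSL ℝ (x - z)) := by
      rw [smul_smul, mul_comm]
    rw [h2]
    exact h1
  have hfe : fderiv ℝ (fun y => g (q y)) =ᶠ[𝓝 x₀]
      fun x => (2 * g₁ (q x)) • innerSL ℝ (x - z) :=
    hφev.mono fun x h => h.fderiv
  have hc : HasFDerivAt (fun x => 2 * g₁ (q x))
      ((2:ℝ) • (g₂ • ((2 : ℝ) • innerSL ℝ (x₀ - z)))) x₀ :=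
    (hg₁.comp_hasFDerivAt x₀ (hasFDerivAt_qsub z x₀)).const_mul 2
  have hW : HasFDerivAt (fun x : EuclideanSpace ℝ (Fin N) => innerSL ℝ (x - z))
      (Psi N) x₀ := by
    have h := (Psi N).hasFDerivAt.comp x₀ ((hasFDerivAt_id x₀).sub_const z)
    exact h
  have hG : HasFDerivAt (fun x => (2 * g₁ (q x)) • innerSL ℝ (x - z))
      ((2 * g₁ (q x₀)) • (Psi N) +
        ((2:ℝ) • (g₂ • ((2 : ℝ) • innerSL ℝ (x₀ - z)))).smulRight (innerSL ℝ (x₀ - z))) x₀ :=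
    hc.smul hW
  have h2 : fderiv ℝ (fderiv ℝ (fun y => g (q y))) x₀ =
      (2 * g₁ (q x₀)) • (Psi N) +
        ((2:ℝ) • (g₂ • ((2 : ℝ) • innerSL ℝ (x₀ - z)))).smulRight (innerSL ℝ (x₀ - z)) := by
    rw [hfe.fderiv_eq]
    exact hG.fderiv
  constructor
  · intro v w
    rw [iteratedFDeriv_two_apply, h2]
    simp only [Matrix.cons_val_zero, Matrix.cons_val_one, Matrix.head_cons,
      ContinuousLinearMap.add_apply, ContinuousLinearMap.smul_apply,
      ContinuousLinearMap.smulRight_apply, innerSL_apply_apply, Psi_apply, smul_eq_mul, hqdef]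
    ring
  · exact hφev.self_of_nhds.fderiv

end Radial2

section Pbounds
variable {N : ℕ}

private lemma orthonormal_single {v : EuclideanSpace ℝ (Fin N)} (hv : ‖v‖ = 1) :
    Orthonormal ℝ (fun _ : Fin 1 => v) := by
  constructor
  · intro i; simpa using hv
  · intro i j hij; exact absurd (Subsingleton.elim i j) hij

private lemma pset_mem_abs_le (φ : EuclideanSpace ℝ (Fin N) → ℝ) (x : EuclideanSpace ℝ (Fin N))
    {s : ℝ} (hs : s ∈ {s : ℝ | ∃ ξ : Fin 1 → EuclideanSpace ℝ (Fin N), Orthonormal ℝ ξ ∧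
      s = ∑ i, iteratedFDeriv ℝ 2 φ x ![ξ i, ξ i]}) :
    |s| ≤ ‖iteratedFDeriv ℝ 2 φ x‖ := by
  obtain ⟨ξ, hξ, rfl⟩ := hs
  have h1 : ‖ξ 0‖ = 1 := hξ.1 0
  rw [Fin.sum_univ_one]
  calc |iteratedFDeriv ℝ 2 φ x ![ξ 0, ξ 0]| = ‖iteratedFDeriv ℝ 2 φ x ![ξ 0, ξ 0]‖ := rfl
    _ ≤ ‖iteratedFDeriv ℝ 2 φ x‖ * ∏ i : Fin 2, ‖(![ξ 0, ξ 0]) i‖ :=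
        (iteratedFDeriv ℝ 2 φ x).le_opNorm _
    _ = ‖iteratedFDeriv ℝ 2 φ x‖ := by
        rw [Fin.prod_univ_two]
        simp [h1]

private lemma pset_bddBelow (φ : EuclideanSpace ℝ (Fin N) → ℝ) (x : EuclideanSpace ℝ (Fin N)) :
    BddBelow {s : ℝ | ∃ ξ : Fin 1 → EuclideanSpace ℝ (Fin N), Orthonormal ℝ ξ ∧
      s = ∑ i, iteratedFDeriv ℝ 2 φ x ![ξ i, ξ i]} :=
  ⟨-‖iteratedFDeriv ℝ 2 φ x‖, fun s hs => neg_le_of_abs_le (pset_mem_abs_le φ x hs)⟩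

private lemma pset_bddAbove (φ : EuclideanSpace ℝ (Fin N) → ℝ) (x : EuclideanSpace ℝ (Fin N)) :
    BddAbove {s : ℝ | ∃ ξ : Fin 1 → EuclideanSpace ℝ (Fin N), Orthonormal ℝ ξ ∧
      s = ∑ i, iteratedFDeriv ℝ 2 φ x ![ξ i, ξ i]} :=
  ⟨‖iteratedFDeriv ℝ 2 φ x‖, fun s hs => le_of_abs_le (pset_mem_abs_le φ x hs)⟩

private lemma Pminus_le_of {φ : EuclideanSpace ℝ (Fin N) → ℝ} {x v : EuclideanSpace ℝ (Fin N)}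
    (hv : ‖v‖ = 1) {t : ℝ} (ht : iteratedFDeriv ℝ 2 φ x ![v, v] = t) :
    Pminus 1 φ x ≤ t := by
  rw [Pminus]
  apply csInf_le (pset_bddBelow φ x)
  exact ⟨fun _ => v, orthonormal_single hv, by rw [Fin.sum_univ_one, ht]⟩

private lemma le_Pplus_of {φ : EuclideanSpace ℝ (Fin N) → ℝ} {x v : EuclideanSpace ℝ (Fin N)}
    (hv : ‖v‖ = 1) {t : ℝ} (ht : iteratedFDeriv ℝ 2 φ x ![v, v] = t) :
    t ≤ Pplus 1 φ x := by
  rw [Pplus]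
  apply le_csSup (pset_bddAbove φ x)
  exact ⟨fun _ => v, orthonormal_single hv, by rw [Fin.sum_univ_one, ht]⟩

private lemma exists_unit (hN : 0 < N) : ∃ v : EuclideanSpace ℝ (Fin N), ‖v‖ = 1 :=
  ⟨EuclideanSpace.single (⟨0, hN⟩ : Fin N) (1:ℝ), by
    rw [EuclideanSpace.norm_single]; norm_num⟩

private lemma le_Pminus_of_const (hN : 0 < N) {φ : EuclideanSpace ℝ (Fin N) → ℝ}
    {x : EuclideanSpace ℝ (Fin N)} {t : ℝ}
    (ht : ∀ v : EuclideanSpace ℝ (Fin N), ‖v‖ = 1 → iteratedFDeriv ℝ 2 φ x ![v, v] = t) :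
    t ≤ Pminus 1 φ x := by
  rw [Pminus]
  obtain ⟨v, hv⟩ := exists_unit hN
  refine le_csInf ⟨t, ⟨fun _ => v, orthonormal_single hv, by rw [Fin.sum_univ_one, ht v hv]⟩⟩ ?_
  rintro s ⟨ξ, hξ, rfl⟩
  rw [Fin.sum_univ_one, ht (ξ 0) (hξ.1 0)]

private lemma Pplus_le_of_const (hN : 0 < N) {φ : EuclideanSpace ℝ (Fin N) → ℝ}
    {x : EuclideanSpace ℝ (Fin N)} {t : ℝ}
    (ht : ∀ v : EuclideanSpace ℝ (Fin N), ‖v‖ = 1 → iteratedFDeriv ℝ 2 φ x ![v, v] = t) :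
    Pplus 1 φ x ≤ t := by
  rw [Pplus]
  obtain ⟨v, hv⟩ := exists_unit hN
  refine csSup_le ⟨t, ⟨fun _ => v, orthonormal_single hv, by rw [Fin.sum_univ_one, ht v hv]⟩⟩ ?_
  rintro s ⟨ξ, hξ, rfl⟩
  rw [Fin.sum_univ_one, ht (ξ 0) (hξ.1 0)]

end Pbounds

section Scalar

private lemma gfun_hasDeriv (lam c : ℝ) {s : ℝ} (hs : 0 < s) :
    HasDerivAt (fun s => lam * (1 - Real.exp (-(c * Real.sqrt s))))
      (lam * c / 2 * (Real.exp (-(c * Real.sqrt s)) * (Real.sqrt s)⁻¹)) s := by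
  have hne : Real.sqrt s ≠ 0 := (Real.sqrt_pos.mpr hs).ne'
  have hsq := Real.hasDerivAt_sqrt hs.ne'
  have hin : HasDerivAt (fun t => -(c * Real.sqrt t)) (-(c * (1 / (2 * Real.sqrt s)))) s :=
    (hsq.const_mul c).neg
  have hexp := hin.exp
  have h := ((hasDerivAt_const s (1:ℝ)).sub hexp).const_mul lam
  refine h.congr_deriv ?_
  ring

private lemma g1fun_hasDeriv (lam c : ℝ) {s : ℝ} (hs : 0 < s) :
    HasDerivAt (fun s => lam * c / 2 * (Real.exp (-(c * Real.sqrt s)) * (Real.sqrt s)⁻¹))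
      (lam * c / 2 * ((Real.exp (-(c * Real.sqrt s)) * (-(c * (1 / (2 * Real.sqrt s))))) *
          (Real.sqrt s)⁻¹ +
        Real.exp (-(c * Real.sqrt s)) * (-(1 / (2 * Real.sqrt s)) / (Real.sqrt s) ^ 2))) s := by
  have hne : Real.sqrt s ≠ 0 := (Real.sqrt_pos.mpr hs).ne'
  have hsq := Real.hasDerivAt_sqrt hs.ne'
  have hin : HasDerivAt (fun t => -(c * Real.sqrt t)) (-(c * (1 / (2 * Real.sqrt s)))) s :=
    (hsq.const_mul c).neg
  have hexp := hin.exp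
  have hinv := hsq.inv hne
  exact (hexp.mul hinv).const_mul (lam * c / 2)

private lemma gfun_contDiffAt (lam c : ℝ) {s : ℝ} (hs : 0 < s) :
    ContDiffAt ℝ 2 (fun s => lam * (1 - Real.exp (-(c * Real.sqrt s)))) s := by
  have houter : ContDiff ℝ 2 (fun t : ℝ => lam * (1 - Real.exp (-(c * t)))) := by
    apply ContDiff.mul contDiff_const
    apply ContDiff.sub contDiff_const
    exact Real.contDiff_exp.comp ((contDiff_const.mul contDiff_id).neg)
  exact (houter.contDiffAt).comp s (Real.contDiffAt_sqrt hs.ne')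

private lemma id1 (lam c r : ℝ) (hr : 0 < r) :
    2 * (lam * c / 2 * (Real.exp (-(c * Real.sqrt (r^2))) * (Real.sqrt (r^2))⁻¹)) +
      4 * (lam * c / 2 * ((Real.exp (-(c * Real.sqrt (r^2))) * (-(c * (1 / (2 * Real.sqrt (r^2)))))) *
          (Real.sqrt (r^2))⁻¹ +
        Real.exp (-(c * Real.sqrt (r^2))) * (-(1 / (2 * Real.sqrt (r^2))) / (Real.sqrt (r^2)) ^ 2))) * r^2
      = -(lam * c^2 * Real.exp (-(c * r))) := by
  rw [Real.sqrt_sq hr.le]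
  field_simp
  ring

private lemma id2 (lam c r : ℝ) (hr : 0 < r) :
    2 * (lam * c / 2 * (Real.exp (-(c * Real.sqrt (r^2))) * (Real.sqrt (r^2))⁻¹)) * r
      = lam * c * Real.exp (-(c * r)) := by
  rw [Real.sqrt_sq hr.le]
  field_simp

end Scalar

private lemma gradient_norm_eq {N : ℕ} (φ : EuclideanSpace ℝ (Fin N) → ℝ)
    (x : EuclideanSpace ℝ (Fin N)) : ‖gradient φ x‖ = ‖fderiv ℝ φ x‖ := by
  rw [gradient]
  exact LinearIsometryEquiv.norm_map _ _

private lemma norm_smul_innerSL {N : ℕ} (t : ℝ) (v : EuclideanSpace ℝ (Fin N)) :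
    ‖t • innerSL ℝ v‖ = |t| * ‖v‖ := by
  have h1 : ‖t • innerSL ℝ v‖ = ‖t‖ * ‖innerSL ℝ v‖ := norm_smul t (innerSL ℝ v)
  rw [h1, innerSL_apply_norm]
  rfl

private lemma quad_contDiffAt {N : ℕ} (a γ : ℝ) (z x : EuclideanSpace ℝ (Fin N)) :
    ContDiffAt ℝ 2 (fun y : EuclideanSpace ℝ (Fin N) => a + γ * ⟪y - z, y - z⟫) x := by
  apply ContDiff.contDiffAt
  apply ContDiff.add contDiff_const
  apply ContDiff.mul contDiff_const
  exact ContDiff.inner ℝ (contDiff_id.sub contDiff_const) (contDiff_id.sub contDiff_const)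


section Quad
variable {N : ℕ}

private lemma quad_hessian (a γ : ℝ) (z x : EuclideanSpace ℝ (Fin N)) :
    (∀ v w : EuclideanSpace ℝ (Fin N),
      iteratedFDeriv ℝ 2 (fun y => a + γ * ⟪y - z, y - z⟫) x ![v, w] = 2 * γ * ⟪v, w⟫) ∧
    fderiv ℝ (fun y => a + γ * ⟪y - z, y - z⟫) x = (2 * γ) • innerSL ℝ (x - z) := by
  have h := radial_hessian z x (fun s => a + γ * s) (fun _ => γ) 0
    (Eventually.of_forall fun s => by
      simpa using ((hasDerivAt_id s).const_mul γ).const_add a)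
    (hasDerivAt_const _ γ)
  exact ⟨fun v w => by rw [h.1 v w]; ring, h.2⟩

private lemma quad_value_unit (a γ : ℝ) (z x : EuclideanSpace ℝ (Fin N))
    {v : EuclideanSpace ℝ (Fin N)} (hv : ‖v‖ = 1) :
    iteratedFDeriv ℝ 2 (fun y => a + γ * ⟪y - z, y - z⟫) x ![v, v] = 2 * γ := by
  rw [(quad_hessian a γ z x).1 v v, real_inner_self_eq_norm_sq, hv]
  ring

private lemma hP_minus_le (hN : 0 < N) (a γ : ℝ) (z x : EuclideanSpace ℝ (Fin N)) :
    Pminus 1 (fun y => a + γ * ⟪y - z, y - z⟫) x ≤ 2 * γ := by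
  obtain ⟨v, hv⟩ := exists_unit hN
  exact Pminus_le_of hv (quad_value_unit a γ z x hv)

private lemma hP_plus_le (hN : 0 < N) (a γ : ℝ) (z x : EuclideanSpace ℝ (Fin N)) :
    Pplus 1 (fun y => a + γ * ⟪y - z, y - z⟫) x ≤ 2 * γ :=
  Pplus_le_of_const hN (fun v hv => quad_value_unit a γ z x hv)

private lemma hP_minus_ge (hN : 0 < N) (a γ : ℝ) (z x : EuclideanSpace ℝ (Fin N)) :
    2 * γ ≤ Pminus 1 (fun y => a + γ * ⟪y - z, y - z⟫) x :=
  le_Pminus_of_const hN (fun v hv => quad_value_unit a γ z x hv)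

private lemma hP_plus_ge (hN : 0 < N) (a γ : ℝ) (z x : EuclideanSpace ℝ (Fin N)) :
    2 * γ ≤ Pplus 1 (fun y => a + γ * ⟪y - z, y - z⟫) x := by
  obtain ⟨v, hv⟩ := exists_unit hN
  exact le_Pplus_of hv (quad_value_unit a γ z x hv)

private lemma quad_grad_norm (a γ : ℝ) (z x : EuclideanSpace ℝ (Fin N)) :
    ‖gradient (fun y => a + γ * ⟪y - z, y - z⟫) x‖ = |2 * γ| * ‖x - z‖ := by
  rw [gradient_norm_eq, (quad_hessian a γ z x).2, norm_smul_innerSL]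

end Quad

section Barrier
variable {N : ℕ}

private lemma barrier_up (hN : 0 < N) {Ω : Set (EuclideanSpace ℝ (Fin N))}
    {H : EuclideanSpace ℝ (Fin N) → EuclideanSpace ℝ (Fin N) → ℝ} {b : ℝ} (hb : 0 ≤ b)
    (hSC1 : SC1 Ω H b)
    {P : (EuclideanSpace ℝ (Fin N) → ℝ) → EuclideanSpace ℝ (Fin N) → ℝ}
    (hP : ∀ (a γ : ℝ) (z x : EuclideanSpace ℝ (Fin N)),
      P (fun y => a + γ * ⟪y - z, y - z⟫) x ≤ 2 * γ)
    {f u : EuclideanSpace ℝ (Fin N) → ℝ}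
    (hsub : IsViscSubsol P Ω H 0 f u)
    {M₀ R B : ℝ} (hfM : ∀ x ∈ Ω, -M₀ ≤ f x) (hR : 0 < R) (hB : 0 ≤ B)
    (hstrict : -B + b * (B * R) < -M₀)
    {y : EuclideanSpace ℝ (Fin N)} (hcl : closure Ω ⊆ closedBall y R)
    (hcomp : IsCompact (closure Ω)) (hucont : ContinuousOn u (closure Ω))
    (hfr : ∀ x ∈ closure Ω, x ∉ Ω → u x = 0) :
    ∀ v ∈ closure Ω, u v ≤ B / 2 * (R ^ 2 - ‖v - y‖ ^ 2) := by
  intro v hv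
  have hne : (closure Ω).Nonempty := ⟨v, hv⟩
  obtain ⟨φ, hφdef⟩ : ∃ φ : EuclideanSpace ℝ (Fin N) → ℝ,
      φ = fun w => B / 2 * R ^ 2 + (-(B / 2)) * ⟪w - y, w - y⟫ := ⟨_, rfl⟩
  have hφval : ∀ w, φ w = B / 2 * (R ^ 2 - ‖w - y‖ ^ 2) := by
    intro w
    rw [hφdef]
    simp only
    rw [real_inner_self_eq_norm_sq]
    ring
  have hφc : Continuous φ := by
    rw [hφdef]
    apply Continuous.add continuous_const
    exact Continuous.mul continuous_const
      ((continuous_id.sub continuous_const).inner (continuous_id.sub continuous_const))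
  obtain ⟨x₀, hx₀K, hmax⟩ := hcomp.exists_isMaxOn hne (hucont.sub hφc.continuousOn)
  have hx0le : u x₀ - φ x₀ ≤ 0 := by
    by_cases hx₀Ω : x₀ ∈ Ω
    · exfalso
      have hloc : IsLocalMaxOn (fun x => u x - φ x) Ω x₀ :=
        (hmax.on_subset subset_closure).localize
      have happ := hsub x₀ hx₀Ω φ (by rw [hφdef]; exact quad_contDiffAt _ _ y _) hloc
      have hPb : P φ x₀ ≤ 2 * (-(B / 2)) := by rw [hφdef]; exact hP _ _ _ _
      have hxR : ‖x₀ - y‖ ≤ R := by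
        have h := hcl hx₀K
        rwa [mem_closedBall, dist_eq_norm] at h
      have hgrad : ‖gradient φ x₀‖ ≤ B * R := by
        rw [hφdef, quad_grad_norm]
        have h1 : |2 * (-(B / 2))| = B := by rw [abs_of_nonpos (by linarith)]; ring
        rw [h1]
        exact mul_le_mul_of_nonneg_left hxR hB
      have hH : H x₀ (gradient φ x₀) ≤ b * (B * R) := by
        have h1 := (abs_le.1 (hSC1 x₀ hx₀Ω (gradient φ x₀))).2
        have h2 : b * ‖gradient φ x₀‖ ≤ b * (B * R) :=
          mul_le_mul_of_nonneg_left hgrad hb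
        linarith
      have hfx := hfM x₀ hx₀Ω
      have : (2 : ℝ) * (-(B / 2)) = -B := by ring
      rw [this] at hPb
      linarith
    · have h0 : u x₀ = 0 := hfr x₀ hx₀K hx₀Ω
      have hxR : ‖x₀ - y‖ ≤ R := by
        have h := hcl hx₀K
        rwa [mem_closedBall, dist_eq_norm] at h
      have hφ0 : 0 ≤ φ x₀ := by
        rw [hφval]
        nlinarith [mul_nonneg (sub_nonneg.2 hxR) (add_nonneg hR.le (norm_nonneg (x₀ - y))), hB]
      linarith
  have hvle := isMaxOn_iff.mp hmax v hv
  have h2 := hφval v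
  simp only [Pi.sub_apply] at hvle
  linarith

private lemma barrier_low (hN : 0 < N) {Ω : Set (EuclideanSpace ℝ (Fin N))}
    {H : EuclideanSpace ℝ (Fin N) → EuclideanSpace ℝ (Fin N) → ℝ} {b : ℝ} (hb : 0 ≤ b)
    (hSC1 : SC1 Ω H b)
    {P : (EuclideanSpace ℝ (Fin N) → ℝ) → EuclideanSpace ℝ (Fin N) → ℝ}
    (hP : ∀ (a γ : ℝ) (z x : EuclideanSpace ℝ (Fin N)),
      2 * γ ≤ P (fun y => a + γ * ⟪y - z, y - z⟫) x)
    {f u : EuclideanSpace ℝ (Fin N) → ℝ}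
    (hsup : IsViscSupersol P Ω H 0 f u)
    {M₀ R B : ℝ} (hfM : ∀ x ∈ Ω, f x ≤ M₀) (hR : 0 < R) (hB : 0 ≤ B)
    (hstrict : M₀ < B - b * (B * R))
    {y : EuclideanSpace ℝ (Fin N)} (hcl : closure Ω ⊆ closedBall y R)
    (hcomp : IsCompact (closure Ω)) (hucont : ContinuousOn u (closure Ω))
    (hfr : ∀ x ∈ closure Ω, x ∉ Ω → u x = 0) :
    ∀ v ∈ closure Ω, -(B / 2) * (R ^ 2 - ‖v - y‖ ^ 2) ≤ u v := by
  intro v hv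
  have hne : (closure Ω).Nonempty := ⟨v, hv⟩
  obtain ⟨φ, hφdef⟩ : ∃ φ : EuclideanSpace ℝ (Fin N) → ℝ,
      φ = fun w => -(B / 2) * R ^ 2 + (B / 2) * ⟪w - y, w - y⟫ := ⟨_, rfl⟩
  have hφval : ∀ w, φ w = -(B / 2) * (R ^ 2 - ‖w - y‖ ^ 2) := by
    intro w
    rw [hφdef]
    simp only
    rw [real_inner_self_eq_norm_sq]
    ring
  have hφc : Continuous φ := by
    rw [hφdef]
    apply Continuous.add continuous_const
    exact Continuous.mul continuous_const
      ((continuous_id.sub continuous_const).inner (continuous_id.sub continuous_const))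
  obtain ⟨x₀, hx₀K, hmin⟩ := hcomp.exists_isMinOn hne (hucont.sub hφc.continuousOn)
  have hx0le : 0 ≤ u x₀ - φ x₀ := by
    by_cases hx₀Ω : x₀ ∈ Ω
    · exfalso
      have hloc : IsLocalMinOn (fun x => u x - φ x) Ω x₀ :=
        (hmin.on_subset subset_closure).localize
      have happ := hsup x₀ hx₀Ω φ (by rw [hφdef]; exact quad_contDiffAt _ _ y _) hloc
      have hPb : 2 * (B / 2) ≤ P φ x₀ := by rw [hφdef]; exact hP _ _ _ _
      have hxR : ‖x₀ - y‖ ≤ R := by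
        have h := hcl hx₀K
        rwa [mem_closedBall, dist_eq_norm] at h
      have hgrad : ‖gradient φ x₀‖ ≤ B * R := by
        rw [hφdef, quad_grad_norm]
        have h1 : |2 * (B / 2)| = B := by rw [abs_of_nonneg (by linarith)]; ring
        rw [h1]
        exact mul_le_mul_of_nonneg_left hxR hB
      have hH : -(b * (B * R)) ≤ H x₀ (gradient φ x₀) := by
        have h1 := (abs_le.1 (hSC1 x₀ hx₀Ω (gradient φ x₀))).1
        have h2 : b * ‖gradient φ x₀‖ ≤ b * (B * R) :=
          mul_le_mul_of_nonneg_left hgrad hb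
        linarith
      have hfx := hfM x₀ hx₀Ω
      have h3 : (2 : ℝ) * (B / 2) = B := by ring
      rw [h3] at hPb
      linarith
    · have h0 : u x₀ = 0 := hfr x₀ hx₀K hx₀Ω
      have hxR : ‖x₀ - y‖ ≤ R := by
        have h := hcl hx₀K
        rwa [mem_closedBall, dist_eq_norm] at h
      have hφ0 : φ x₀ ≤ 0 := by
        rw [hφval]
        nlinarith [mul_nonneg (sub_nonneg.2 hxR) (add_nonneg hR.le (norm_nonneg (x₀ - y))), hB]
      linarith
  have hvle := isMinOn_iff.mp hmin v hv
  have h2 := hφval v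
  simp only [Pi.sub_apply] at hvle
  linarith

end Barrier


section Interior
variable {N : ℕ}

private lemma interior_sub {Ω : Set (EuclideanSpace ℝ (Fin N))}
    {H : EuclideanSpace ℝ (Fin N) → EuclideanSpace ℝ (Fin N) → ℝ} {b : ℝ} (hb : 0 ≤ b)
    (hSC1 : SC1 Ω H b) {f u : EuclideanSpace ℝ (Fin N) → ℝ}
    (hsub : IsViscSubsol (Pminus 1) Ω H 0 f u) {M₀ lam c R : ℝ}
    (hfM : ∀ x ∈ Ω, -M₀ ≤ f x) (hlam : 0 < lam) (hcb : c = b + 1) (hR : 0 < R)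
    (hkey : M₀ < lam * c * Real.exp (-(2 * c * R)))
    {xm ym : EuclideanSpace ℝ (Fin N)} (hxm : xm ∈ Ω) (hne : xm ≠ ym)
    (h2R : ‖xm - ym‖ ≤ 2 * R)
    (hloc : IsLocalMaxOn (fun x => u x -
      lam * (1 - Real.exp (-(c * Real.sqrt (⟪x - ym, x - ym⟫))))) Ω xm) : False := by
  have hc0 : 0 < c := by rw [hcb]; linarith
  obtain ⟨r₀, hr₀def⟩ : ∃ r : ℝ, r = ‖xm - ym‖ := ⟨_, rfl⟩
  have hr₀pos : 0 < r₀ := by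
    rw [hr₀def, norm_pos_iff, sub_ne_zero]
    exact hne
  have hinner : (⟪xm - ym, xm - ym⟫ : ℝ) = r₀ ^ 2 := by
    rw [real_inner_self_eq_norm_sq, hr₀def]
  have hs₀pos : (0:ℝ) < ⟪xm - ym, xm - ym⟫ := by rw [hinner]; positivity
  -- the test function
  obtain ⟨φ, hφdef⟩ : ∃ φ : EuclideanSpace ℝ (Fin N) → ℝ,
      φ = fun x => lam * (1 - Real.exp (-(c * Real.sqrt (⟪x - ym, x - ym⟫)))) := ⟨_, rfl⟩
  have hq2 : ContDiff ℝ 2 (fun x : EuclideanSpace ℝ (Fin N) => (⟪x - ym, x - ym⟫ : ℝ)) :=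
    ContDiff.inner ℝ (contDiff_id.sub contDiff_const) (contDiff_id.sub contDiff_const)
  have hC2 : ContDiffAt ℝ 2 φ xm := by
    rw [hφdef]
    exact ContDiffAt.comp (f := fun x => (⟪x - ym, x - ym⟫ : ℝ)) xm (gfun_contDiffAt lam c hs₀pos) hq2.contDiffAt
  have hloc' : IsLocalMaxOn (fun x => u x - φ x) Ω xm := by rw [hφdef]; exact hloc
  have happ := hsub xm hxm φ hC2 hloc'
  -- Hessian computation
  have hev : ∀ᶠ s in 𝓝 ((⟪xm - ym, xm - ym⟫ : ℝ)),
      HasDerivAt (fun s => lam * (1 - Real.exp (-(c * Real.sqrt s))))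
        (lam * c / 2 * (Real.exp (-(c * Real.sqrt s)) * (Real.sqrt s)⁻¹)) s :=
    (eventually_gt_nhds hs₀pos).mono fun s hs => gfun_hasDeriv lam c hs
  have hrad := radial_hessian ym xm
    (fun s => lam * (1 - Real.exp (-(c * Real.sqrt s))))
    (fun s => lam * c / 2 * (Real.exp (-(c * Real.sqrt s)) * (Real.sqrt s)⁻¹))
    (lam * c / 2 * ((Real.exp (-(c * Real.sqrt (⟪xm - ym, xm - ym⟫))) *
        (-(c * (1 / (2 * Real.sqrt (⟪xm - ym, xm - ym⟫)))))) *
        (Real.sqrt (⟪xm - ym, xm - ym⟫))⁻¹ +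
      Real.exp (-(c * Real.sqrt (⟪xm - ym, xm - ym⟫))) *
        (-(1 / (2 * Real.sqrt (⟪xm - ym, xm - ym⟫))) / (Real.sqrt (⟪xm - ym, xm - ym⟫)) ^ 2)))
    hev (g1fun_hasDeriv lam c hs₀pos)
  obtain ⟨e, hedef⟩ : ∃ e : EuclideanSpace ℝ (Fin N), e = (r₀⁻¹) • (xm - ym) := ⟨_, rfl⟩
  have hnorme : ‖e‖ = 1 := by
    rw [hedef, norm_smul, norm_inv, Real.norm_eq_abs, abs_of_pos hr₀pos, ← hr₀def,
      inv_mul_cancel₀ hr₀pos.ne']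
  have hee : (⟪e, e⟫ : ℝ) = 1 := by
    rw [real_inner_self_eq_norm_sq, hnorme]
    norm_num
  have hxe : (⟪xm - ym, e⟫ : ℝ) = r₀ := by
    rw [hedef, real_inner_smul_right, hinner]
    field_simp
  have hIT : iteratedFDeriv ℝ 2 φ xm ![e, e] = -(lam * c ^ 2 * Real.exp (-(c * r₀))) := by
    rw [hφdef]
    have hval := hrad.1 e e
    rw [hee, hxe, hinner] at hval
    beta_reduce at hval
    rw [hval]
    linear_combination id1 lam c r₀ hr₀pos
  have hPle : Pminus 1 φ xm ≤ -(lam * c ^ 2 * Real.exp (-(c * r₀))) :=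
    Pminus_le_of hnorme hIT
  have hfd : fderiv ℝ φ xm =
      (2 * (lam * c / 2 * (Real.exp (-(c * Real.sqrt (⟪xm - ym, xm - ym⟫))) *
        (Real.sqrt (⟪xm - ym, xm - ym⟫))⁻¹))) • innerSL ℝ (xm - ym) := by
    rw [hφdef]
    have h := hrad.2
    beta_reduce at h
    exact h
  have hg1nn : 0 ≤ lam * c / 2 * (Real.exp (-(c * Real.sqrt (⟪xm - ym, xm - ym⟫))) *
      (Real.sqrt (⟪xm - ym, xm - ym⟫))⁻¹) := by positivity
  have hgradnorm : ‖gradient φ xm‖ = lam * c * Real.exp (-(c * r₀)) := by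
    rw [gradient_norm_eq, hfd, norm_smul_innerSL, abs_of_nonneg (by linarith), ← hr₀def]
    have h2 := id2 lam c r₀ hr₀pos
    rw [hinner]
    linear_combination h2
  have hH : H xm (gradient φ xm) ≤ b * (lam * c * Real.exp (-(c * r₀))) := by
    have h1 := (abs_le.1 (hSC1 xm hxm (gradient φ xm))).2
    rw [hgradnorm] at h1
    exact h1
  -- contradiction
  have hexp1 : Real.exp (-(2 * c * R)) ≤ Real.exp (-(c * r₀)) := by
    apply Real.exp_le_exp.2
    nlinarith
  have hcalc : -(lam * c ^ 2 * Real.exp (-(c * r₀))) + b * (lam * c * Real.exp (-(c * r₀)))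
      = -(lam * c * Real.exp (-(c * r₀))) := by
    rw [hcb]
    ring
  have hflow := hfM xm hxm
  have hmono : lam * c * Real.exp (-(2 * c * R)) ≤ lam * c * Real.exp (-(c * r₀)) := by
    apply mul_le_mul_of_nonneg_left hexp1
    positivity
  nlinarith [happ, hPle, hH, hcalc, hflow, hkey, hmono]

private lemma interior_sup {Ω : Set (EuclideanSpace ℝ (Fin N))}
    {H : EuclideanSpace ℝ (Fin N) → EuclideanSpace ℝ (Fin N) → ℝ} {b : ℝ} (hb : 0 ≤ b)
    (hSC1 : SC1 Ω H b) {f u : EuclideanSpace ℝ (Fin N) → ℝ}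
    (hsup : IsViscSupersol (Pplus 1) Ω H 0 f u) {M₀ lam c R : ℝ}
    (hfM : ∀ x ∈ Ω, f x ≤ M₀) (hlam : 0 < lam) (hcb : c = b + 1) (hR : 0 < R)
    (hkey : M₀ < lam * c * Real.exp (-(2 * c * R)))
    {xm ym : EuclideanSpace ℝ (Fin N)} (hym : ym ∈ Ω) (hne : ym ≠ xm)
    (h2R : ‖ym - xm‖ ≤ 2 * R)
    (hloc : IsLocalMinOn (fun y => u y -
      (-(lam * (1 - Real.exp (-(c * Real.sqrt (⟪y - xm, y - xm⟫))))))) Ω ym) : False := by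
  have hc0 : 0 < c := by rw [hcb]; linarith
  obtain ⟨r₀, hr₀def⟩ : ∃ r : ℝ, r = ‖ym - xm‖ := ⟨_, rfl⟩
  have hr₀pos : 0 < r₀ := by
    rw [hr₀def, norm_pos_iff, sub_ne_zero]
    exact hne
  have hinner : (⟪ym - xm, ym - xm⟫ : ℝ) = r₀ ^ 2 := by
    rw [real_inner_self_eq_norm_sq, hr₀def]
  have hs₀pos : (0:ℝ) < ⟪ym - xm, ym - xm⟫ := by rw [hinner]; positivity
  obtain ⟨φ, hφdef⟩ : ∃ φ : EuclideanSpace ℝ (Fin N) → ℝ,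
      φ = fun y => -(lam * (1 - Real.exp (-(c * Real.sqrt (⟪y - xm, y - xm⟫))))) := ⟨_, rfl⟩
  have hq2 : ContDiff ℝ 2 (fun y : EuclideanSpace ℝ (Fin N) => (⟪y - xm, y - xm⟫ : ℝ)) :=
    ContDiff.inner ℝ (contDiff_id.sub contDiff_const) (contDiff_id.sub contDiff_const)
  have hC2 : ContDiffAt ℝ 2 φ ym := by
    rw [hφdef]
    exact ((gfun_contDiffAt lam c hs₀pos).comp ym hq2.contDiffAt).neg
  have hloc' : IsLocalMinOn (fun y => u y - φ y) Ω ym := by rw [hφdef]; exact hloc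
  have happ := hsup ym hym φ hC2 hloc'
  have hev : ∀ᶠ s in 𝓝 ((⟪ym - xm, ym - xm⟫ : ℝ)),
      HasDerivAt (fun s => -(lam * (1 - Real.exp (-(c * Real.sqrt s)))))
        (-(lam * c / 2 * (Real.exp (-(c * Real.sqrt s)) * (Real.sqrt s)⁻¹))) s :=
    (eventually_gt_nhds hs₀pos).mono fun s hs => (gfun_hasDeriv lam c hs).neg
  have hrad := radial_hessian xm ym
    (fun s => -(lam * (1 - Real.exp (-(c * Real.sqrt s)))))
    (fun s => -(lam * c / 2 * (Real.exp (-(c * Real.sqrt s)) * (Real.sqrt s)⁻¹)))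
    (-(lam * c / 2 * ((Real.exp (-(c * Real.sqrt (⟪ym - xm, ym - xm⟫))) *
        (-(c * (1 / (2 * Real.sqrt (⟪ym - xm, ym - xm⟫)))))) *
        (Real.sqrt (⟪ym - xm, ym - xm⟫))⁻¹ +
      Real.exp (-(c * Real.sqrt (⟪ym - xm, ym - xm⟫))) *
        (-(1 / (2 * Real.sqrt (⟪ym - xm, ym - xm⟫))) / (Real.sqrt (⟪ym - xm, ym - xm⟫)) ^ 2))))
    hev ((g1fun_hasDeriv lam c hs₀pos).neg)
  obtain ⟨e, hedef⟩ : ∃ e : EuclideanSpace ℝ (Fin N), e = (r₀⁻¹) • (ym - xm) := ⟨_, rfl⟩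
  have hnorme : ‖e‖ = 1 := by
    rw [hedef, norm_smul, norm_inv, Real.norm_eq_abs, abs_of_pos hr₀pos, ← hr₀def,
      inv_mul_cancel₀ hr₀pos.ne']
  have hee : (⟪e, e⟫ : ℝ) = 1 := by
    rw [real_inner_self_eq_norm_sq, hnorme]
    norm_num
  have hxe : (⟪ym - xm, e⟫ : ℝ) = r₀ := by
    rw [hedef, real_inner_smul_right, hinner]
    field_simp
  have hIT : iteratedFDeriv ℝ 2 φ ym ![e, e] = lam * c ^ 2 * Real.exp (-(c * r₀)) := by
    rw [hφdef]
    have hval := hrad.1 e e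
    rw [hee, hxe, hinner] at hval
    beta_reduce at hval
    rw [hval]
    linear_combination -(id1 lam c r₀ hr₀pos)
  have hPge : lam * c ^ 2 * Real.exp (-(c * r₀)) ≤ Pplus 1 φ ym := le_Pplus_of hnorme hIT
  have hfd : fderiv ℝ φ ym =
      (2 * (-(lam * c / 2 * (Real.exp (-(c * Real.sqrt (⟪ym - xm, ym - xm⟫))) *
        (Real.sqrt (⟪ym - xm, ym - xm⟫))⁻¹)))) • innerSL ℝ (ym - xm) := by
    rw [hφdef]
    have h := hrad.2
    beta_reduce at h
    exact h
  have hg1nn : 0 ≤ lam * c / 2 * (Real.exp (-(c * Real.sqrt (⟪ym - xm, ym - xm⟫))) *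
      (Real.sqrt (⟪ym - xm, ym - xm⟫))⁻¹) := by positivity
  have hgradnorm : ‖gradient φ ym‖ = lam * c * Real.exp (-(c * r₀)) := by
    rw [gradient_norm_eq, hfd, norm_smul_innerSL, abs_of_nonpos (by linarith), ← hr₀def]
    have h2 := id2 lam c r₀ hr₀pos
    rw [hinner]
    linear_combination h2
  have hH : -(b * (lam * c * Real.exp (-(c * r₀)))) ≤ H ym (gradient φ ym) := by
    have h1 := (abs_le.1 (hSC1 ym hym (gradient φ ym))).1
    rw [hgradnorm] at h1
    exact h1
  have hexp1 : Real.exp (-(2 * c * R)) ≤ Real.exp (-(c * r₀)) := by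
    apply Real.exp_le_exp.2
    nlinarith
  have hcalc : lam * c ^ 2 * Real.exp (-(c * r₀)) - b * (lam * c * Real.exp (-(c * r₀)))
      = lam * c * Real.exp (-(c * r₀)) := by
    rw [hcb]
    ring
  have hfup := hfM ym hym
  have hmono : lam * c * Real.exp (-(2 * c * R)) ≤ lam * c * Real.exp (-(c * r₀)) := by
    apply mul_le_mul_of_nonneg_left hexp1
    positivity
  nlinarith [happ, hPge, hH, hcalc, hfup, hkey, hmono]

end Interior


section Wbounds

private lemma W_lower (lam c R r : ℝ) (hlam : 0 ≤ lam) (hc : 0 < c) (hr0 : 0 ≤ r)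
    (hr2R : r ≤ 2 * R) :
    lam * c * Real.exp (-(2 * c * R)) * r ≤ lam * (1 - Real.exp (-(c * r))) := by
  have h1 : c * r + 1 ≤ Real.exp (c * r) := by
    have := Real.add_one_le_exp (c * r)
    linarith
  have h2 : Real.exp (-(c * r)) * Real.exp (c * r) = 1 := by
    rw [← Real.exp_add]
    norm_num
  have h3 : Real.exp (-(2 * c * R)) ≤ Real.exp (-(c * r)) := by
    apply Real.exp_le_exp.2
    nlinarith
  have h4 : 0 < Real.exp (-(c * r)) := Real.exp_pos _
  have k1 : Real.exp (-(c * r)) * (c * r) ≤ Real.exp (-(c * r)) * (Real.exp (c * r) - 1) :=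
    mul_le_mul_of_nonneg_left (by linarith) h4.le
  have k2 : Real.exp (-(c * r)) * (Real.exp (c * r) - 1) = 1 - Real.exp (-(c * r)) := by
    linear_combination h2
  have k3 : Real.exp (-(2 * c * R)) * (c * r) ≤ Real.exp (-(c * r)) * (c * r) :=
    mul_le_mul_of_nonneg_right h3 (mul_nonneg hc.le hr0)
  have k4 : lam * (Real.exp (-(2 * c * R)) * (c * r)) ≤ lam * (1 - Real.exp (-(c * r))) :=
    mul_le_mul_of_nonneg_left (k3.trans (k1.trans_eq k2)) hlam
  nlinarith [k4]

private lemma W_upper (lam c r : ℝ) (hlam : 0 ≤ lam) (hcr : 0 ≤ c * r) :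
    lam * (1 - Real.exp (-(c * r))) ≤ lam * c * r := by
  have h1 := Real.add_one_le_exp (-(c * r))
  nlinarith [mul_le_mul_of_nonneg_left (show 1 - Real.exp (-(c * r)) ≤ c * r by linarith) hlam]

private lemma ann_ineq {R t s : ℝ} (hR : 0 < R) (ht : t ≤ R) (h2 : R - s ≤ t) (hs : 0 ≤ s)
    (ht0 : 0 ≤ t) : R ^ 2 - t ^ 2 ≤ 2 * R * s := by
  nlinarith

end Wbounds

/-- global Lipschitz regularity for viscosity solutions of
`𝒫⁻₁(D²u) + H(x,∇u) = f` (or `𝒫⁺₁(D²u) + H(x,∇u) = f`) vanishing on the boundary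
of a hula hoop domain `Ω ∈ 𝒞_R` with `bR < 1`. -/
theorem statement5 {N : ℕ} (hN : 2 ≤ N) (R : ℝ) (hR : 0 < R)
    (Ω : Set (EuclideanSpace ℝ (Fin N))) (hΩ : HulaHoop R Ω)
    (H : EuclideanSpace ℝ (Fin N) → EuclideanSpace ℝ (Fin N) → ℝ) (b : ℝ) (hb : 0 ≤ b)
    (hHcont : ContinuousOn (Function.uncurry H)
      (Ω ×ˢ (univ : Set (EuclideanSpace ℝ (Fin N)))))
    (hSC1 : SC1 Ω H b) (hbR : b * R < 1)
    (f : EuclideanSpace ℝ (Fin N) → ℝ)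
    (hfc : ContinuousOn f Ω) (hfb : ∃ M : ℝ, ∀ x ∈ Ω, |f x| ≤ M)
    (u : EuclideanSpace ℝ (Fin N) → ℝ)
    (huc : ContinuousOn u (closure Ω))
    (hbdry : ∀ x ∈ frontier Ω, u x = 0)
    (hsol : (IsViscSubsol (Pminus 1) Ω H 0 f u ∧ IsViscSupersol (Pminus 1) Ω H 0 f u) ∨
            (IsViscSubsol (Pplus 1) Ω H 0 f u ∧ IsViscSupersol (Pplus 1) Ω H 0 f u)) :
    ∃ L : NNReal, LipschitzOnWith L u (closure Ω) := by
  classical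
  rcases Ω.eq_empty_or_nonempty with hΩe | hΩne
  · refine ⟨1, ?_⟩
    intro x hx
    rw [hΩe, closure_empty] at hx
    exact absurd hx (notMem_empty x)
  obtain ⟨Y, hYne, hΩY⟩ := hΩ
  obtain ⟨y₀, hy₀⟩ := hYne
  have hNpos : 0 < N := by omega
  have hsubY : ∀ y ∈ Y, Ω ⊆ ball y R := fun y hy => by
    rw [hΩY]; exact biInter_subset_of_mem hy
  have hclY : ∀ y ∈ Y, closure Ω ⊆ closedBall y R := fun y hy =>
    (closure_mono (hsubY y hy)).trans closure_ball_subset_closedBall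
  have hcomp : IsCompact (closure Ω) :=
    (isCompact_closedBall y₀ R).of_isClosed_subset isClosed_closure (hclY y₀ hy₀)
  have hfr : ∀ x ∈ closure Ω, x ∉ Ω → u x = 0 := by
    intro x hx hxΩ
    exact hbdry x ⟨hx, fun hint => hxΩ (interior_subset hint)⟩
  obtain ⟨M, hM⟩ := hfb
  obtain ⟨M₀, hM₀def⟩ : ∃ m : ℝ, m = max M 0 := ⟨_, rfl⟩
  have hM₀0 : 0 ≤ M₀ := by rw [hM₀def]; exact le_max_right _ _
  have hMf : ∀ x ∈ Ω, |f x| ≤ M₀ := fun x hx =>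
    (hM x hx).trans (by rw [hM₀def]; exact le_max_left _ _)
  have hflow : ∀ x ∈ Ω, -M₀ ≤ f x := fun x hx => (abs_le.1 (hMf x hx)).1
  have hfup : ∀ x ∈ Ω, f x ≤ M₀ := fun x hx => (abs_le.1 (hMf x hx)).2
  have h1bR : 0 < 1 - b * R := by linarith
  obtain ⟨B, hBdef⟩ : ∃ B : ℝ, B = (M₀ + 1) / (1 - b * R) := ⟨_, rfl⟩
  have hB0 : 0 < B := by rw [hBdef]; exact div_pos (by linarith) h1bR
  have hBkey : B * (1 - b * R) = M₀ + 1 := by rw [hBdef]; field_simp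
  have hstrict1 : -B + b * (B * R) < -M₀ := by nlinarith [hBkey]
  have hstrict2 : M₀ < B - b * (B * R) := by nlinarith [hBkey]
  have hup : ∀ y ∈ Y, ∀ v ∈ closure Ω, u v ≤ B / 2 * (R ^ 2 - ‖v - y‖ ^ 2) := by
    intro y hy
    rcases hsol with ⟨hsub, _⟩ | ⟨hsub, _⟩
    · exact barrier_up hNpos hb hSC1 (hP_minus_le hNpos) hsub hflow hR hB0.le hstrict1
        (hclY y hy) hcomp huc hfr
    · exact barrier_up hNpos hb hSC1 (hP_plus_le hNpos) hsub hflow hR hB0.le hstrict1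
        (hclY y hy) hcomp huc hfr
  have hlo : ∀ y ∈ Y, ∀ v ∈ closure Ω, -(B / 2) * (R ^ 2 - ‖v - y‖ ^ 2) ≤ u v := by
    intro y hy
    rcases hsol with ⟨_, hsup⟩ | ⟨_, hsup⟩
    · exact barrier_low hNpos hb hSC1 (hP_minus_ge hNpos) hsup hfup hR hB0.le hstrict2
        (hclY y hy) hcomp huc hfr
    · exact barrier_low hNpos hb hSC1 (hP_plus_ge hNpos) hsup hfup hR hB0.le hstrict2
        (hclY y hy) hcomp huc hfr
  obtain ⟨c, hcdef⟩ : ∃ c : ℝ, c = b + 1 := ⟨_, rfl⟩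
  have hc0 : 0 < c := by rw [hcdef]; linarith
  obtain ⟨lam, hlamdef⟩ : ∃ l : ℝ, l = Real.exp (2 * c * R) * (M₀ + B * R + 1) / c := ⟨_, rfl⟩
  have hBR0 : 0 < B * R := mul_pos hB0 hR
  have hlam0 : 0 < lam := by
    rw [hlamdef]
    exact div_pos (mul_pos (Real.exp_pos _) (by linarith)) hc0
  have hlamkey : lam * c * Real.exp (-(2 * c * R)) = M₀ + B * R + 1 := by
    rw [hlamdef, Real.exp_neg]
    have he := Real.exp_ne_zero (2 * c * R)
    field_simp
  have hkeyM : M₀ < lam * c * Real.exp (-(2 * c * R)) := by rw [hlamkey]; linarith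
  -- the two-point estimate
  have key : ∀ x ∈ closure Ω, ∀ z ∈ closure Ω,
      u x - u z ≤ lam * (1 - Real.exp (-(c * Real.sqrt (⟪x - z, x - z⟫)))) := by
    obtain ⟨Φ, hΦdef⟩ : ∃ Φ : (EuclideanSpace ℝ (Fin N)) × (EuclideanSpace ℝ (Fin N)) → ℝ,
        Φ = fun p => u p.1 - u p.2 -
          lam * (1 - Real.exp (-(c * Real.sqrt (⟪p.1 - p.2, p.1 - p.2⟫)))) := ⟨_, rfl⟩
    have hKK := hcomp.prod hcomp
    have hKKne : ((closure Ω) ×ˢ (closure Ω)).Nonempty :=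
      (hΩne.closure).prod (hΩne.closure)
    have hΦc : ContinuousOn Φ ((closure Ω) ×ˢ (closure Ω)) := by
      rw [hΦdef]
      apply ContinuousOn.sub
      · apply ContinuousOn.sub
        · exact huc.comp continuous_fst.continuousOn (fun p hp => (mem_prod.1 hp).1)
        · exact huc.comp continuous_snd.continuousOn (fun p hp => (mem_prod.1 hp).2)
      · apply Continuous.continuousOn
        apply continuous_const.mul
        apply Continuous.sub continuous_const
        apply Real.continuous_exp.comp
        apply Continuous.neg
        apply continuous_const.mul
        apply Real.continuous_sqrt.comp
        exact (continuous_fst.sub continuous_snd).inner (continuous_fst.sub continuous_snd)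
    obtain ⟨m, hmK, hmax⟩ := hKK.exists_isMaxOn hKKne hΦc
    have hm1 : m.1 ∈ closure Ω := (mem_prod.1 hmK).1
    have hm2 : m.2 ∈ closure Ω := (mem_prod.1 hmK).2
    have hΦm : Φ m ≤ 0 := by
      by_contra hcon
      push_neg at hcon
      by_cases heq : m.1 = m.2
      · rw [hΦdef] at hcon
        simp only [heq, sub_self, inner_zero_left, Real.sqrt_zero, mul_zero, neg_zero,
          Real.exp_zero] at hcon
        norm_num at hcon
      obtain ⟨r₀, hr₀def⟩ : ∃ r : ℝ, r = ‖m.1 - m.2‖ := ⟨_, rfl⟩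
      have hr₀pos : 0 < r₀ := by rw [hr₀def, norm_pos_iff, sub_ne_zero]; exact heq
      have hinner : (⟪m.1 - m.2, m.1 - m.2⟫ : ℝ) = r₀ ^ 2 := by
        rw [real_inner_self_eq_norm_sq, hr₀def]
      have hsq : Real.sqrt (⟪m.1 - m.2, m.1 - m.2⟫) = r₀ := by
        rw [hinner, Real.sqrt_sq hr₀pos.le]
      have h2R : r₀ ≤ 2 * R := by
        have d1 : dist m.1 y₀ ≤ R := mem_closedBall.1 ((hclY y₀ hy₀) hm1)
        have d2 : dist m.2 y₀ ≤ R := mem_closedBall.1 ((hclY y₀ hy₀) hm2)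
        have d3 : dist m.1 m.2 ≤ dist m.1 y₀ + dist y₀ m.2 := dist_triangle _ _ _
        have d4 : dist y₀ m.2 = dist m.2 y₀ := dist_comm _ _
        have d5 : r₀ = dist m.1 m.2 := by rw [hr₀def, dist_eq_norm]
        linarith
      have hWlo : (M₀ + B * R + 1) * r₀ ≤ lam * (1 - Real.exp (-(c * r₀))) := by
        have hW := W_lower lam c R r₀ hlam0.le hc0 hr₀pos.le h2R
        rw [hlamkey] at hW
        exact hW
      by_cases hxmΩ : m.1 ∈ Ω
      · by_cases hymΩ : m.2 ∈ Ω
        · -- interior case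
          have h2R' : ‖m.1 - m.2‖ ≤ 2 * R := by rw [← hr₀def]; exact h2R
          rcases hsol with ⟨hsub, _⟩ | ⟨_, hsup⟩
          · have hlocmax : IsLocalMaxOn (fun x => u x -
                lam * (1 - Real.exp (-(c * Real.sqrt (⟪x - m.2, x - m.2⟫))))) Ω m.1 := by
              apply IsMaxOn.localize
              rw [isMaxOn_iff]
              intro x hx
              have h := isMaxOn_iff.1 hmax (x, m.2) (mem_prod.2 ⟨subset_closure hx, hm2⟩)
              rw [hΦdef] at h
              simp only at h
              linarith
            exact interior_sub hb hSC1 hsub hflow hlam0 hcdef hR hkeyM hxmΩ heq h2R' hlocmax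
          · have e2 : (⟪m.1 - m.2, m.1 - m.2⟫ : ℝ) = ⟪m.2 - m.1, m.2 - m.1⟫ := by
              rw [← neg_sub m.2 m.1, inner_neg_neg]
            have hlocmin : IsLocalMinOn (fun y => u y -
                (-(lam * (1 - Real.exp (-(c * Real.sqrt (⟪y - m.1, y - m.1⟫))))))) Ω m.2 := by
              apply IsMinOn.localize
              rw [isMinOn_iff]
              intro y hy
              have h := isMaxOn_iff.1 hmax (m.1, y) (mem_prod.2 ⟨hm1, subset_closure hy⟩)
              rw [hΦdef] at h
              simp only at h
              have e1 : (⟪m.1 - y, m.1 - y⟫ : ℝ) = ⟪y - m.1, y - m.1⟫ := by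
                rw [← neg_sub y m.1, inner_neg_neg]
              rw [e1, e2] at h
              linarith
            have hne2 : m.2 ≠ m.1 := fun h => heq h.symm
            have h2R'' : ‖m.2 - m.1‖ ≤ 2 * R := by rw [norm_sub_rev]; exact h2R'
            exact interior_sup hb hSC1 hsup hfup hlam0 hcdef hR hkeyM hymΩ hne2 h2R'' hlocmin
        · -- m.2 on the boundary
          have hu2 : u m.2 = 0 := hfr m.2 hm2 hymΩ
          obtain ⟨ys, hysY, hysR⟩ : ∃ y ∈ Y, R ≤ dist m.2 y := by
            by_contra hcon2
            push_neg at hcon2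
            exact hymΩ (by rw [hΩY]; exact mem_iInter₂.2 fun y hy => mem_ball.2 (hcon2 y hy))
          have ht1 : ‖m.1 - ys‖ ≤ R := by
            have h := mem_closedBall.1 ((hclY ys hysY) hm1)
            rwa [dist_eq_norm] at h
          have ht2 : R - r₀ ≤ ‖m.1 - ys‖ := by
            have htr : dist m.2 ys ≤ dist m.2 m.1 + dist m.1 ys := dist_triangle _ _ _
            have ha : dist m.2 m.1 = r₀ := by rw [dist_comm, dist_eq_norm, ← hr₀def]
            have hb' : dist m.1 ys = ‖m.1 - ys‖ := dist_eq_norm _ _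
            linarith
          have hann : R ^ 2 - ‖m.1 - ys‖ ^ 2 ≤ 2 * R * r₀ :=
            ann_ineq hR ht1 ht2 hr₀pos.le (norm_nonneg _)
          have hub : u m.1 ≤ B / 2 * (R ^ 2 - ‖m.1 - ys‖ ^ 2) := hup ys hysY m.1 hm1
          have hub2 : u m.1 ≤ B * R * r₀ := by nlinarith [hB0]
          rw [hΦdef] at hcon
          simp only at hcon
          rw [hsq, hu2] at hcon
          nlinarith [hWlo, hr₀pos]
      · -- m.1 on the boundary
        have hu1 : u m.1 = 0 := hfr m.1 hm1 hxmΩ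
        obtain ⟨ys, hysY, hysR⟩ : ∃ y ∈ Y, R ≤ dist m.1 y := by
          by_contra hcon2
          push_neg at hcon2
          exact hxmΩ (by rw [hΩY]; exact mem_iInter₂.2 fun y hy => mem_ball.2 (hcon2 y hy))
        have ht1 : ‖m.2 - ys‖ ≤ R := by
          have h := mem_closedBall.1 ((hclY ys hysY) hm2)
          rwa [dist_eq_norm] at h
        have ht2 : R - r₀ ≤ ‖m.2 - ys‖ := by
          have htr : dist m.1 ys ≤ dist m.1 m.2 + dist m.2 ys := dist_triangle _ _ _
          have ha : dist m.1 m.2 = r₀ := by rw [dist_eq_norm, ← hr₀def]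
          have hb' : dist m.2 ys = ‖m.2 - ys‖ := dist_eq_norm _ _
          linarith
        have hann : R ^ 2 - ‖m.2 - ys‖ ^ 2 ≤ 2 * R * r₀ :=
          ann_ineq hR ht1 ht2 hr₀pos.le (norm_nonneg _)
        have hlb : -(B / 2) * (R ^ 2 - ‖m.2 - ys‖ ^ 2) ≤ u m.2 := hlo ys hysY m.2 hm2
        have hlb2 : -(B * R * r₀) ≤ u m.2 := by nlinarith [hB0]
        rw [hΦdef] at hcon
        simp only at hcon
        rw [hsq, hu1] at hcon
        nlinarith [hWlo, hr₀pos]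
    intro x hx z hz
    have h := (isMaxOn_iff.1 hmax (x, z) (mem_prod.2 ⟨hx, hz⟩)).trans hΦm
    rw [hΦdef] at h
    simp only at h
    linarith
  -- conclusion
  refine ⟨Real.toNNReal (lam * c), ?_⟩
  apply LipschitzOnWith.of_dist_le_mul
  intro x hx z hz
  have k1 := key x hx z hz
  have k2 := key z hz x hx
  have hsq1 : Real.sqrt (⟪x - z, x - z⟫) = ‖x - z‖ := by
    rw [real_inner_self_eq_norm_sq, Real.sqrt_sq (norm_nonneg _)]
  have hsq2 : Real.sqrt (⟪z - x, z - x⟫) = ‖x - z‖ := by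
    rw [real_inner_self_eq_norm_sq, Real.sqrt_sq (norm_nonneg _), norm_sub_rev]
  rw [hsq1] at k1
  rw [hsq2] at k2
  have hWub := W_upper lam c (‖x - z‖) hlam0.le (mul_nonneg hc0.le (norm_nonneg _))
  rw [Real.dist_eq, dist_eq_norm, Real.coe_toNNReal _ (mul_nonneg hlam0.le hc0.le)]
  rw [abs_le]
  constructor
  · linarith
  · linarith
end
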